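/- arXiv:math/0609051 — 9 statements merged into one kernel-verified Lean document; each statement's English description precedes it below -/
import Mathlib

section
/- Theorem 3.1 (integral expansion, Möbius form). Let E be an integral gain graph on vertex set {1,…,n} and let m ≥ 0 be an integer. Then the number of proper maps x : {1,…,n} → {1,2,…,m} (i.e. maps with 1 ≤ x_v ≤ m for all v that are proper for E) equals ∑_{B ∈ Lat^b(E)} μ(∅,B) · ∏_{W ∈ π(B)} (m − h_B(W))⁺. -/
open Finset
open scoped Classical

/-- An edge of an integral gain graph on `Fin n`: the triple `(i, j, g)` represents an edge
from `i` to `j` with gain `g`. -/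
abbrev GainEdge (n : ℕ) := Fin n × Fin n × ℤ

/-- `θ` is a potential for the edge set `S`: `θ j - θ i = g` for every edge `(i, j, g) ∈ S`. -/
def IsPotential {n : ℕ} (S : Finset (GainEdge n)) (θ : Fin n → ℤ) : Prop :=
  ∀ e ∈ S, θ e.2.1 - θ e.1 = e.2.2

/-- An edge set is balanced if it admits a potential. -/
def IsBalanced {n : ℕ} (S : Finset (GainEdge n)) : Prop :=
  ∃ θ : Fin n → ℤ, IsPotential S θ

/-- Two vertices lie in the same connected component of (the underlying graph of) `S`. -/
def SameComp {n : ℕ} (S : Finset (GainEdge n)) (u v : Fin n) : Prop :=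
  Relation.EqvGen (fun a b => ∃ g : ℤ, (a, b, g) ∈ S) u v

/-- The partition `π(S)` of the vertex set into the connected components of `S`,
represented as the finite set of its blocks. -/
noncomputable def blocks {n : ℕ} (S : Finset (GainEdge n)) : Finset (Finset (Fin n)) :=
  Finset.univ.image fun v => Finset.univ.filter fun u => SameComp S u v

/-- A balanced edge set `B ⊆ E` is closed (in `E`) if adjoining to `B` any edge of `E ∖ B` whose
endpoints lie in the same block of `π(B)` destroys balance. -/
def GGClosed {n : ℕ} (E B : Finset (GainEdge n)) : Prop :=
  ∀ e ∈ E \ B, SameComp B e.1 e.2.1 → ¬ IsBalanced (insert e B)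

/-- The poset `Lat^b(E)` of closed balanced subsets of `E` (as a finite set, ordered by
inclusion). -/
noncomputable def Latb {n : ℕ} (E : Finset (GainEdge n)) : Finset (Finset (GainEdge n)) :=
  E.powerset.filter fun B => IsBalanced B ∧ GGClosed E B

/-- A coloration `x` is proper for `E` if `x j ≠ x i + g` for every edge `(i, j, g) ∈ E`. -/
def ProperFor {n : ℕ} (E : Finset (GainEdge n)) (x : Fin n → ℤ) : Prop :=
  ∀ e ∈ E, x e.2.1 ≠ x e.1 + e.2.2

/-- The number of proper colorations of `E` with colors in `{1, …, m}`. -/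
noncomputable def properCount {n : ℕ} (E : Finset (GainEdge n)) (m : ℤ) : ℕ :=
  Nat.card {x : Fin n → ℤ // (∀ v, 1 ≤ x v ∧ x v ≤ m) ∧ ProperFor E x}


namespace Thm31

variable {n : ℕ}

lemma pot_diff {S : Finset (GainEdge n)} {θ θ' : Fin n → ℤ}
    (hθ : IsPotential S θ) (hθ' : IsPotential S θ') {u v : Fin n}
    (h : SameComp S u v) : θ u - θ' u = θ v - θ' v := by
  induction h with
  | rel a b hab =>
      obtain ⟨g, hg⟩ := hab
      have h1 : θ b - θ a = g := hθ _ hg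
      have h2 : θ' b - θ' a = g := hθ' _ hg
      omega
  | refl a => rfl
  | symm a b _ ih => omega
  | trans a b c _ _ ih1 ih2 => omega

lemma sameComp_empty {u v : Fin n} (h : SameComp (∅ : Finset (GainEdge n)) u v) : u = v := by
  induction h with
  | rel a b hab => simp at hab
  | refl a => rfl
  | symm a b _ ih => omega
  | trans a b c _ _ ih1 ih2 => omega

noncomputable def blockOf (S : Finset (GainEdge n)) (v : Fin n) : Finset (Fin n) :=
  Finset.univ.filter fun u => SameComp S u v

lemma mem_blockOf {S : Finset (GainEdge n)} {u v : Fin n} :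
    u ∈ blockOf S v ↔ SameComp S u v := by simp [blockOf]

lemma mem_blockOf_self (S : Finset (GainEdge n)) (v : Fin n) : v ∈ blockOf S v :=
  mem_blockOf.2 (Relation.EqvGen.refl v)

lemma blockOf_mem_blocks (S : Finset (GainEdge n)) (v : Fin n) : blockOf S v ∈ blocks S := by
  simp only [blocks, Finset.mem_image]
  exact ⟨v, Finset.mem_univ v, rfl⟩

lemma blockOf_eq_of_sameComp {S : Finset (GainEdge n)} {u v : Fin n} (h : SameComp S u v) :
    blockOf S u = blockOf S v := by
  ext w
  simp only [mem_blockOf]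
  exact ⟨fun hw => Relation.EqvGen.trans _ _ _ hw h,
    fun hw => Relation.EqvGen.trans _ _ _ hw (Relation.EqvGen.symm _ _ h)⟩

lemma eq_blockOf {S : Finset (GainEdge n)} {W : Finset (Fin n)} (hW : W ∈ blocks S)
    {v : Fin n} (hv : v ∈ W) : W = blockOf S v := by
  simp only [blocks, Finset.mem_image] at hW
  obtain ⟨w, -, rfl⟩ := hW
  have : blockOf S w = Finset.univ.filter fun u => SameComp S u w := rfl
  rw [← this] at hv ⊢
  exact (blockOf_eq_of_sameComp (mem_blockOf.1 hv)).symm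

lemma blocks_nonempty {S : Finset (GainEdge n)} {W : Finset (Fin n)} (hW : W ∈ blocks S) :
    W.Nonempty := by
  simp only [blocks, Finset.mem_image] at hW
  obtain ⟨w, -, rfl⟩ := hW
  exact ⟨w, mem_blockOf_self S w⟩

noncomputable def Ix {n : ℕ} (E : Finset (GainEdge n)) (x : Fin n → ℤ) : Finset (GainEdge n) :=
  E.filter fun e => x e.2.1 = x e.1 + e.2.2

lemma Ix_potential (E : Finset (GainEdge n)) (x : Fin n → ℤ) : IsPotential (Ix E x) x := by
  intro e he
  simp only [Ix, Finset.mem_filter] at he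
  omega

lemma Ix_mem_Latb (E : Finset (GainEdge n)) (x : Fin n → ℤ) : Ix E x ∈ Latb E := by
  simp only [Latb, Finset.mem_filter, Finset.mem_powerset]
  refine ⟨Finset.filter_subset _ _, ⟨x, Ix_potential E x⟩, ?_⟩
  intro e he hcomp ⟨θ, hθ⟩
  have hθ' : IsPotential (Ix E x) θ := fun e' he' => hθ e' (Finset.mem_insert_of_mem he')
  have hd := pot_diff hθ' (Ix_potential E x) hcomp
  have hg : θ e.2.1 - θ e.1 = e.2.2 := hθ e (Finset.mem_insert_self e _)
  rw [Finset.mem_sdiff] at he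
  exact he.2 (Finset.mem_filter.2 ⟨he.1, by omega⟩)

lemma empty_mem_Latb (E : Finset (GainEdge n)) (hE : ∀ e ∈ E, e.1 < e.2.1) :
    (∅ : Finset (GainEdge n)) ∈ Latb E := by
  simp only [Latb, Finset.mem_filter, Finset.mem_powerset]
  refine ⟨Finset.empty_subset _, ⟨0, fun e he => absurd he (Finset.notMem_empty e)⟩, ?_⟩
  intro e he hcomp _
  have := sameComp_empty hcomp
  rw [Finset.mem_sdiff] at he
  exact absurd (hE e he.1) (by omega)

end Thm31

namespace Thm31
set_option linter.dupNamespace false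

noncomputable def Box (n : ℕ) (m : ℤ) : Finset (Fin n → ℤ) :=
  Fintype.piFinset fun _ : Fin n => Finset.Icc (1 : ℤ) m

variable {n : ℕ}

lemma mem_Box {m : ℤ} {x : Fin n → ℤ} : x ∈ Box n m ↔ ∀ v, 1 ≤ x v ∧ x v ≤ m := by
  simp [Box, Fintype.mem_piFinset]

lemma count_potentials (B : Finset (GainEdge n)) (m : ℤ)
    (θ : Fin n → ℤ) (hθ : IsPotential B θ) :
    (((Box n m).filter fun x => IsPotential B x).card : ℤ)
      = ∏ W ∈ (blocks B).attach,
          max (m - ((W.1.sup' (blocks_nonempty W.2) θ)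
            - (W.1.inf' (blocks_nonempty W.2) θ))) 0 := by
  classical
  set t := Fintype.piFinset fun W : {W // W ∈ blocks B} =>
    Finset.Icc (1 - W.1.inf' (blocks_nonempty W.2) θ) (m - W.1.sup' (blocks_nonempty W.2) θ)
    with ht
  have hcard : ((Box n m).filter fun x => IsPotential B x).card = t.card := by
    apply Finset.card_bij'
      (i := fun x _ => fun W : {W // W ∈ blocks B} =>
        x (blocks_nonempty W.2).choose - θ (blocks_nonempty W.2).choose)
      (j := fun c _ => fun v => θ v + c ⟨blockOf B v, blockOf_mem_blocks B v⟩)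
    · -- hi
      intro x hx
      rw [Finset.mem_filter, mem_Box] at hx
      obtain ⟨hbox, hpot⟩ := hx
      rw [ht, Fintype.mem_piFinset]
      intro W
      set r := (blocks_nonempty W.2).choose with hr
      have hrW : r ∈ W.1 := (blocks_nonempty W.2).choose_spec
      rw [Finset.mem_Icc]
      constructor
      · obtain ⟨v0, hv0, hv0e⟩ := W.1.exists_mem_eq_inf' (blocks_nonempty W.2) θ
        have hsc : SameComp B v0 r := by
          have h1 := eq_blockOf W.2 hv0
          have h2 := mem_blockOf.1 (h1 ▸ hrW : r ∈ blockOf B v0)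
          exact Relation.EqvGen.symm _ _ h2
        have := pot_diff hpot hθ hsc
        have := (hbox v0).1
        omega
      · obtain ⟨v0, hv0, hv0e⟩ := W.1.exists_mem_eq_sup' (blocks_nonempty W.2) θ
        have hsc : SameComp B v0 r := by
          have h1 := eq_blockOf W.2 hv0
          have h2 := mem_blockOf.1 (h1 ▸ hrW : r ∈ blockOf B v0)
          exact Relation.EqvGen.symm _ _ h2
        have := pot_diff hpot hθ hsc
        have := (hbox v0).2
        omega
    · -- hj
      intro c hc
      rw [ht, Fintype.mem_piFinset] at hc
      rw [Finset.mem_filter, mem_Box]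
      constructor
      · intro v
        have h : 1 - (blockOf B v).inf' (blocks_nonempty (blockOf_mem_blocks B v)) θ
              ≤ c ⟨blockOf B v, blockOf_mem_blocks B v⟩
            ∧ c ⟨blockOf B v, blockOf_mem_blocks B v⟩
              ≤ m - (blockOf B v).sup' (blocks_nonempty (blockOf_mem_blocks B v)) θ := by
          have := hc ⟨blockOf B v, blockOf_mem_blocks B v⟩
          rwa [Finset.mem_Icc] at this
        have hv : v ∈ blockOf B v := mem_blockOf_self B v
        have hinf : (blockOf B v).inf' (blocks_nonempty (blockOf_mem_blocks B v)) θ ≤ θ v :=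
          Finset.inf'_le _ hv
        have hsup : θ v ≤ (blockOf B v).sup' (blocks_nonempty (blockOf_mem_blocks B v)) θ :=
          Finset.le_sup' _ hv
        show 1 ≤ θ v + c ⟨blockOf B v, blockOf_mem_blocks B v⟩
          ∧ θ v + c ⟨blockOf B v, blockOf_mem_blocks B v⟩ ≤ m
        omega
      · intro e he
        have hsc : SameComp B e.1 e.2.1 := Relation.EqvGen.rel _ _ ⟨e.2.2, he⟩
        have hbl : blockOf B e.1 = blockOf B e.2.1 := blockOf_eq_of_sameComp hsc
        have hce : c ⟨blockOf B e.1, blockOf_mem_blocks B e.1⟩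
            = c ⟨blockOf B e.2.1, blockOf_mem_blocks B e.2.1⟩ := by
          congr 1
          exact Subtype.ext hbl
        have hg := hθ e he
        show θ e.2.1 + c ⟨blockOf B e.2.1, blockOf_mem_blocks B e.2.1⟩
          - (θ e.1 + c ⟨blockOf B e.1, blockOf_mem_blocks B e.1⟩) = e.2.2
        omega
    · -- left inverse
      intro x hx
      rw [Finset.mem_filter, mem_Box] at hx
      funext v
      have hbm := blockOf_mem_blocks B v
      set r := (blocks_nonempty hbm).choose with hr
      have hrW : r ∈ blockOf B v := (blocks_nonempty hbm).choose_spec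
      have hsc : SameComp B r v := mem_blockOf.1 hrW
      have hd := pot_diff hx.2 hθ hsc
      show θ v + (x r - θ r) = x v
      omega
    · -- right inverse
      intro c hc
      funext W
      set r := (blocks_nonempty W.2).choose with hr
      have hrW : r ∈ W.1 := (blocks_nonempty W.2).choose_spec
      have hbl : blockOf B r = W.1 := (eq_blockOf W.2 hrW).symm
      have hce : c ⟨blockOf B r, blockOf_mem_blocks B r⟩ = c W := by
        congr 1
        exact Subtype.ext hbl
      show θ r + c ⟨blockOf B r, blockOf_mem_blocks B r⟩ - θ r = c W
      omega
  rw [hcard, ht, Fintype.card_piFinset]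
  push_cast
  rw [Finset.univ_eq_attach]
  apply Finset.prod_congr rfl
  intro W _
  rw [Int.card_Icc, Int.toNat_eq_max]
  ring_nf

end Thm31

open Thm31

/-- **Theorem 3.1** (integral expansion, Möbius form).  For an integral gain graph `E` on
`{1, …, n}` and an integer `m ≥ 0`, the number of proper colorations with colors in `{1, …, m}`
equals `∑_{B ∈ Lat^b(E)} μ(∅, B) ∏_{W ∈ π(B)} (m − h_B(W))⁺`.  Here `mu` is the Möbius
function of the poset `Lat^b(E)` (characterized by its defining recurrence `hmu`), and
`ht B W` is the height `h_B(W) = max_{v ∈ W} θ v − min_{v ∈ W} θ v` for any potential `θ`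
of `B` (characterized by `hht`). -/
theorem integral_expansion (n : ℕ) (E : Finset (GainEdge n))
    (hE : ∀ e ∈ E, e.1 < e.2.1)
    (m : ℤ) (hm : 0 ≤ m)
    (mu : Finset (GainEdge n) → ℤ)
    (hmu : ∀ B ∈ Latb E,
      ∑ A ∈ (Latb E).filter (· ⊆ B), mu A = if B = ∅ then 1 else 0)
    (ht : Finset (GainEdge n) → Finset (Fin n) → ℤ)
    (hht : ∀ B ∈ Latb E, ∀ θ : Fin n → ℤ, IsPotential B θ →
      ∀ W ∈ blocks B, ∀ hW : W.Nonempty, ht B W = W.sup' hW θ - W.inf' hW θ) :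
    (properCount E m : ℤ) =
      ∑ B ∈ Latb E, mu B * ∏ W ∈ blocks B, max (m - ht B W) 0 := by
  classical
  set f : Finset (GainEdge n) → ℤ :=
    fun A => (((Box n m).filter fun x => Ix E x = A).card : ℤ) with hf
  -- LHS equals f ∅
  have hPC : (properCount E m : ℤ) = f ∅ := by
    have h1 : properCount E m = ((Box n m).filter fun x => ProperFor E x).card := by
      rw [properCount, ← Nat.card_eq_finsetCard]
      refine Nat.card_congr (Equiv.subtypeEquivRight fun x => ?_)
      simp only [Finset.mem_filter, mem_Box]
    have h2 : ((Box n m).filter fun x => ProperFor E x)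
        = ((Box n m).filter fun x => Ix E x = ∅) := by
      apply Finset.filter_congr
      intro x _
      simp only [Ix, Finset.filter_eq_empty_iff, ProperFor, eq_iff_iff]
    rw [hf, h1, h2]
  -- each term of RHS
  have hterm : ∀ B ∈ Latb E, mu B * ∏ W ∈ blocks B, max (m - ht B W) 0
      = ∑ A ∈ (Latb E).filter (fun A => B ⊆ A), mu B * f A := by
    intro B hB
    obtain ⟨hBE, ⟨θ, hθ⟩, -⟩ :
        B ⊆ E ∧ IsBalanced B ∧ GGClosed E B := by
      have := Finset.mem_filter.1 hB
      exact ⟨Finset.mem_powerset.1 this.1, this.2⟩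
    have hprod : ∏ W ∈ blocks B, max (m - ht B W) 0
        = (((Box n m).filter fun x => IsPotential B x).card : ℤ) := by
      rw [count_potentials B m θ hθ, ← Finset.prod_attach (blocks B)
        (fun W => max (m - ht B W) 0)]
      apply Finset.prod_congr rfl
      intro W _
      rw [hht B hB θ hθ W.1 W.2 (blocks_nonempty W.2)]
    have hfib : (((Box n m).filter fun x => IsPotential B x).card : ℤ)
        = ∑ A ∈ (Latb E).filter (fun A => B ⊆ A), f A := by
      have hiff : ∀ x, IsPotential B x ↔ B ⊆ Ix E x := by
        intro x
        constructor
        · intro hp e he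
          exact Finset.mem_filter.2 ⟨hBE he, by have := hp e he; omega⟩
        · intro hs e he
          have := Finset.mem_filter.1 (hs he)
          omega
      have hsplit : ((Box n m).filter fun x => IsPotential B x).card
          = ∑ A ∈ (Latb E).filter (fun A => B ⊆ A),
              (((Box n m).filter fun x => IsPotential B x).filter
                fun x => Ix E x = A).card := by
        apply Finset.card_eq_sum_card_fiberwise
        intro x hx
        have hx' := Finset.mem_filter.1 hx
        exact Finset.mem_filter.2 ⟨Ix_mem_Latb E x, (hiff x).1 hx'.2⟩
      rw [hsplit]
      push_cast
      apply Finset.sum_congr rfl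
      intro A hA
      have hBA : B ⊆ A := (Finset.mem_filter.1 hA).2
      congr 1
      congr 1
      rw [Finset.filter_filter]
      apply Finset.filter_congr
      intro x _
      constructor
      · exact fun h => h.2
      · intro h
        exact ⟨(hiff x).2 (h ▸ hBA), h⟩
    rw [hprod, hfib, Finset.mul_sum]
  rw [Finset.sum_congr rfl hterm, hPC]
  -- swap the two sums
  have hswap : ∑ B ∈ Latb E, ∑ A ∈ (Latb E).filter (fun A => B ⊆ A), mu B * f A
      = ∑ A ∈ Latb E, (∑ B ∈ (Latb E).filter (· ⊆ A), mu B) * f A := by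
    simp_rw [Finset.sum_filter, Finset.sum_mul]
    rw [Finset.sum_comm]
    apply Finset.sum_congr rfl
    intro A _
    apply Finset.sum_congr rfl
    intro B _
    by_cases h : B ⊆ A <;> simp [h]
  rw [hswap]
  have hfin : ∀ A ∈ Latb E, (∑ B ∈ (Latb E).filter (· ⊆ A), mu B) * f A
      = if A = ∅ then f A else 0 := by
    intro A hA
    rw [hmu A hA]
    by_cases h : A = ∅ <;> simp [h]
  rw [Finset.sum_congr rfl hfin, Finset.sum_ite_eq' (Latb E) ∅ f,
    if_pos (empty_mem_Latb E hE)]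
end

section
/- Theorem 3.1 in subset-expansion (Whitney) form. Let E be an integral gain graph on vertex set {1,…,n} and let m ≥ 0 be an integer. Then the number of proper maps x : {1,…,n} → {1,2,…,m} equals ∑_{S ⊆ E, S balanced} (−1)^{|S|} · ∏_{W ∈ π(S)} (m − h_S(W))⁺, where the sum is over all balanced subsets S of E. -/
open Finset
open scoped Classical

lemma sameComp_equivalence {n : ℕ} (S : Finset (GainEdge n)) :
    Equivalence (SameComp S) :=
  ⟨fun x => Relation.EqvGen.refl x, fun h => Relation.EqvGen.symm _ _ h,
    fun h h' => Relation.EqvGen.trans _ _ _ h h'⟩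

def ggSetoid {n : ℕ} (S : Finset (GainEdge n)) : Setoid (Fin n) :=
  ⟨SameComp S, sameComp_equivalence S⟩

lemma pot_const {n : ℕ} {S : Finset (GainEdge n)} {x θ : Fin n → ℤ}
    (hx : IsPotential S x) (hθ : IsPotential S θ) {u v : Fin n}
    (h : SameComp S u v) : x u - θ u = x v - θ v := by
  induction h with
  | rel a b hab =>
    obtain ⟨g, hg⟩ := hab
    have h1 := hx (a, b, g) hg
    have h2 := hθ (a, b, g) hg
    simp only at h1 h2
    linarith
  | refl => rfl
  | symm a b _ ih => linarith
  | trans a b c _ _ ih1 ih2 => linarith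

lemma edge_sameComp {n : ℕ} {S : Finset (GainEdge n)} {e : GainEdge n} (he : e ∈ S) :
    SameComp S e.1 e.2.1 :=
  Relation.EqvGen.rel _ _ ⟨e.2.2, he⟩

noncomputable def heightTerm {n : ℕ} (θ : Fin n → ℤ) (m : ℤ) (W : Finset (Fin n)) : ℤ :=
  if h : W.Nonempty then max (m - (W.sup' h θ - W.inf' h θ)) 0 else 1

lemma count_potentials {n : ℕ} (S : Finset (GainEdge n)) (θ : Fin n → ℤ)
    (hθ : IsPotential S θ) (m : ℤ) :
    ((((Fintype.piFinset fun _ : Fin n => Finset.Icc (1:ℤ) m).filter fun x =>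
        IsPotential S x).card : ℤ))
      = ∏ W ∈ blocks S, heightTerm θ m W := by
  classical
  letI st := ggSetoid S
  have hst : ∀ u v : Fin n, (st.r u v) = SameComp S u v := fun _ _ => rfl
  let cls : Quotient st → Finset (Fin n) :=
    fun q => Finset.univ.filter fun u => SameComp S u q.out
  have mem_cls : ∀ (u : Fin n) (q : Quotient st), u ∈ cls q ↔ ⟦u⟧ = q := by
    intro u q
    simp only [cls, Finset.mem_filter, Finset.mem_univ, true_and]
    constructor
    · intro h
      rw [← Quotient.out_eq q]
      exact Quotient.sound h
    · intro h
      have h2 : st.r (Quotient.out (⟦u⟧ : Quotient st)) u := Quotient.mk_out u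
      rw [h] at h2
      exact (sameComp_equivalence S).symm h2
  have self_mem : ∀ u : Fin n, u ∈ cls ⟦u⟧ := fun u => (mem_cls u ⟦u⟧).2 rfl
  have cls_ne : ∀ q, (cls q).Nonempty :=
    fun q => ⟨q.out, (mem_cls _ _).2 (Quotient.out_eq q)⟩
  have cls_inj : Function.Injective cls := by
    intro q q' h
    have h1 : ⟦q.out⟧ = q' := (mem_cls q.out q').1 (h ▸ (mem_cls q.out q).2 (Quotient.out_eq q))
    rw [Quotient.out_eq] at h1
    exact h1
  have blocks_eq : blocks S = Finset.univ.image cls := by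
    unfold blocks
    ext W
    simp only [Finset.mem_image, Finset.mem_univ, true_and]
    constructor
    · rintro ⟨v, rfl⟩
      refine ⟨⟦v⟧, ?_⟩
      ext u
      simp only [cls, Finset.mem_filter, Finset.mem_univ, true_and]
      have hvo : SameComp S (Quotient.out (⟦v⟧ : Quotient st)) v := Quotient.mk_out v
      constructor
      · exact fun h => (sameComp_equivalence S).trans h hvo
      · exact fun h => (sameComp_equivalence S).trans h ((sameComp_equivalence S).symm hvo)
    · rintro ⟨q, rfl⟩
      exact ⟨q.out, rfl⟩
  let T : Quotient st → Finset ℤ := fun q =>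
    Finset.Icc (1 - (cls q).inf' (cls_ne q) θ) (m - (cls q).sup' (cls_ne q) θ)
  have key : ((Fintype.piFinset fun _ : Fin n => Finset.Icc (1:ℤ) m).filter fun x =>
      IsPotential S x).card = (Fintype.piFinset T).card := by
    apply Finset.card_bij' (fun x _ => fun q => x q.out - θ q.out)
      (fun c _ => fun v => θ v + c ⟦v⟧)
    · intro x hx
      rw [Finset.mem_filter] at hx
      obtain ⟨hx1, hx2⟩ := hx
      rw [Fintype.mem_piFinset] at hx1 ⊢
      intro q
      rw [Finset.mem_Icc]
      obtain ⟨v0, hv0, hinf⟩ := Finset.exists_mem_eq_inf' (cls_ne q) θ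
      obtain ⟨v1, hv1, hsup⟩ := Finset.exists_mem_eq_sup' (cls_ne q) θ
      have hc0 : SameComp S v0 q.out := (Finset.mem_filter.1 hv0).2
      have hc1 : SameComp S v1 q.out := (Finset.mem_filter.1 hv1).2
      have e0 := pot_const hx2 hθ hc0
      have e1 := pot_const hx2 hθ hc1
      have b0 := (Finset.mem_Icc.1 (hx1 v0)).1
      have b1 := (Finset.mem_Icc.1 (hx1 v1)).2
      constructor
      · rw [hinf]; linarith
      · rw [hsup]; linarith
    · intro x hx
      rw [Finset.mem_filter] at hx
      funext v
      have hvo : SameComp S v (Quotient.out (⟦v⟧ : Quotient st)) :=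
        (sameComp_equivalence S).symm (Quotient.mk_out v)
      have := pot_const hx.2 hθ hvo
      simp only
      linarith
    · intro c hc
      funext q
      simp only [Quotient.out_eq]
      ring
    · intro c hc
      rw [Fintype.mem_piFinset] at hc
      rw [Finset.mem_filter]
      constructor
      · rw [Fintype.mem_piFinset]
        intro v
        have hcv := Finset.mem_Icc.1 (hc ⟦v⟧)
        have h1 : (cls ⟦v⟧).inf' (cls_ne ⟦v⟧) θ ≤ θ v := Finset.inf'_le _ (self_mem v)
        have h2 : θ v ≤ (cls ⟦v⟧).sup' (cls_ne ⟦v⟧) θ := Finset.le_sup' _ (self_mem v)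
        rw [Finset.mem_Icc]
        constructor <;> linarith [hcv.1, hcv.2]
      · intro e he
        have hq : (⟦e.1⟧ : Quotient st) = ⟦e.2.1⟧ := Quotient.sound (edge_sameComp he)
        simp only [hq]
        have := hθ e he
        linarith
  rw [key, Fintype.card_piFinset, blocks_eq,
    Finset.prod_image (fun a _ b _ h => cls_inj h)]
  push_cast
  apply Finset.prod_congr rfl
  intro q _
  show ((Finset.Icc (1 - (cls q).inf' (cls_ne q) θ) (m - (cls q).sup' (cls_ne q) θ)).card : ℤ)
      = heightTerm θ m (cls q)
  rw [Int.card_Icc, heightTerm, dif_pos (cls_ne q)]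
  have harith : m - (cls q).sup' (cls_ne q) θ + 1 - (1 - (cls q).inf' (cls_ne q) θ)
      = m - ((cls q).sup' (cls_ne q) θ - (cls q).inf' (cls_ne q) θ) := by ring
  rw [harith, Int.toNat_eq_max]

lemma blocks_nonempty {n : ℕ} {S : Finset (GainEdge n)} {W : Finset (Fin n)}
    (hW : W ∈ blocks S) : W.Nonempty := by
  unfold blocks at hW
  rw [Finset.mem_image] at hW
  obtain ⟨v, _, rfl⟩ := hW
  exact ⟨v, Finset.mem_filter.2 ⟨Finset.mem_univ v, Relation.EqvGen.refl v⟩⟩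

/-- **Theorem 3.1 in subset-expansion (Whitney) form.**  For an integral gain graph `E` on
`{1, …, n}` and an integer `m ≥ 0`, the number of proper colorations with colors in `{1, …, m}`
equals `∑_{S ⊆ E balanced} (−1)^{|S|} ∏_{W ∈ π(S)} (m − h_S(W))⁺`.  Here `ht S W` is the
height `h_S(W) = max_{v ∈ W} θ v − min_{v ∈ W} θ v` for any potential `θ` of `S`
(characterized by `hht`). -/
theorem integral_expansion_whitney (n : ℕ) (E : Finset (GainEdge n))
    (hE : ∀ e ∈ E, e.1 < e.2.1)
    (m : ℤ) (hm : 0 ≤ m)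
    (ht : Finset (GainEdge n) → Finset (Fin n) → ℤ)
    (hht : ∀ S ∈ E.powerset, IsBalanced S → ∀ θ : Fin n → ℤ, IsPotential S θ →
      ∀ W ∈ blocks S, ∀ hW : W.Nonempty, ht S W = W.sup' hW θ - W.inf' hW θ) :
    (properCount E m : ℤ) =
      ∑ S ∈ E.powerset.filter IsBalanced,
        (-1 : ℤ) ^ S.card * ∏ W ∈ blocks S, max (m - ht S W) 0 := by
  classical
  set Box : Finset (Fin n → ℤ) := Fintype.piFinset (fun _ => Finset.Icc (1:ℤ) m) with hBoxdef
  have h1 : (properCount E m : ℤ) = (((Box.filter fun x => ProperFor E x)).card : ℤ) := by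
    have hiff : ∀ x : Fin n → ℤ, ((∀ v, 1 ≤ x v ∧ x v ≤ m) ∧ ProperFor E x) ↔
        x ∈ Box.filter fun x => ProperFor E x := by
      intro x
      simp [hBoxdef, Finset.mem_filter, Fintype.mem_piFinset, Finset.mem_Icc, forall_and]
    unfold properCount
    rw [Nat.card_congr (Equiv.subtypeEquivRight hiff), Nat.card_eq_finsetCard]
  have hind : ∀ x ∈ Box, (if ProperFor E x then (1:ℤ) else 0)
      = ∑ S ∈ E.powerset, (-1:ℤ)^S.card * (if IsPotential S x then 1 else 0) := by
    intro x _
    rw [show (if ProperFor E x then (1:ℤ) else 0)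
        = if (∀ e ∈ E, ¬ (x e.2.1 = x e.1 + e.2.2)) then 1 else 0 from by simp [ProperFor]]
    rw [← Finset.prod_boole]
    have hstep : ∀ e ∈ E, (if ¬(x e.2.1 = x e.1 + e.2.2) then (1:ℤ) else 0)
        = (if (x e.2.1 = x e.1 + e.2.2) then (-1:ℤ) else 0) + 1 := by
      intro e _; by_cases h : x e.2.1 = x e.1 + e.2.2 <;> simp [h]
    rw [Finset.prod_congr rfl hstep, Finset.prod_add]
    apply Finset.sum_congr rfl
    intro S hS
    rw [Finset.prod_const_one, mul_one]
    have h2 : ∀ e ∈ S, (if (x e.2.1 = x e.1 + e.2.2) then (-1:ℤ) else 0)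
        = (-1) * (if (x e.2.1 = x e.1 + e.2.2) then 1 else 0) := by
      intro e _; by_cases h : x e.2.1 = x e.1 + e.2.2 <;> simp [h]
    rw [Finset.prod_congr rfl h2, Finset.prod_mul_distrib, Finset.prod_const,
      Finset.prod_boole]
    congr 1
    have hiff2 : (∀ e ∈ S, x e.2.1 = x e.1 + e.2.2) ↔ IsPotential S x := by
      unfold IsPotential
      constructor <;> intro h e he <;> have := h e he <;> omega
    rw [if_congr hiff2 rfl rfl]
  have h2 : ((Box.filter fun x => ProperFor E x).card : ℤ)
      = ∑ S ∈ E.powerset, (-1:ℤ)^S.card * ((Box.filter fun x => IsPotential S x).card : ℤ) := by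
    rw [show ((Box.filter fun x => ProperFor E x).card : ℤ)
        = ∑ x ∈ Box, if ProperFor E x then (1:ℤ) else 0 from (Finset.sum_boole _ _).symm]
    rw [Finset.sum_congr rfl hind, Finset.sum_comm]
    apply Finset.sum_congr rfl
    intro S hS
    rw [← Finset.mul_sum, Finset.sum_boole]
  rw [h1, h2]
  rw [← Finset.sum_filter_of_ne (p := IsBalanced)
    (fun S hS hne => by
      by_contra hb
      apply hne
      have : (Box.filter fun x => IsPotential S x) = ∅ := by
        rw [Finset.filter_eq_empty_iff]
        intro x _ hx
        exact hb ⟨x, hx⟩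
      rw [this]
      simp)]
  apply Finset.sum_congr rfl
  intro S hS
  rw [Finset.mem_filter] at hS
  obtain ⟨hSE, θ, hθ⟩ := hS
  congr 1
  rw [count_potentials S θ hθ m]
  apply Finset.prod_congr rfl
  intro W hW
  have hWne := blocks_nonempty hW
  rw [heightTerm, dif_pos hWne, hht S hSE ⟨θ, hθ⟩ θ hθ W hW hWne]
end

section
/- Corollary 3.2 (piecewise polynomial structure). Let E be a nonempty integral gain graph on vertex set {1,…,n} with n ≥ 1, and for an integer m ≥ 0 let f(m) be the number of proper maps x : {1,…,n} → {1,2,…,m}. Then there exist an integer k ≥ 1, positive integers d_1,…,d_k with d_1 = n and d_j < n for all j ≥ 2, positive integers μ_1 = 1, μ_2, …, μ_k, and for each j ∈ {1,…,k} nonnegative integers r_{j,1} ≥ r_{j,2} ≥ … ≥ r_{j,d_j} ≥ 0 with r_{1,i} = 0 for all i, such that for every integer m ≥ 0: f(m) = ∑_{j : r_{j,1} ≤ m} (−1)^{n−d_j} μ_j ∏_{i=1}^{d_j} (m − r_{j,i}); in particular the j = 1 term is m^n. -/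
open Finset
open scoped Classical

/-! ### Auxiliary development -/

namespace PW

variable {n : ℕ}

/-- `x` satisfies all equations of `S`. -/
def Sat (S : Finset (GainEdge n)) (x : Fin n → ℤ) : Prop :=
  ∀ e ∈ S, x e.2.1 = x e.1 + e.2.2

/-- The cube of colorations. -/
noncomputable def Box (n : ℕ) (m : ℤ) : Finset (Fin n → ℤ) :=
  Fintype.piFinset fun _ => Finset.Icc 1 m

lemma mem_Box {m : ℤ} {x : Fin n → ℤ} : x ∈ Box n m ↔ ∀ v, 1 ≤ x v ∧ x v ≤ m := by
  simp [Box, Fintype.mem_piFinset, Finset.mem_Icc]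

/-- Number of colorations in the cube satisfying all equations of `S`. -/
noncomputable def N (S : Finset (GainEdge n)) (m : ℤ) : ℕ :=
  ((Box n m).filter fun x => Sat S x).card

def uv (w : Fin n) : Fin n → ℚ := fun t => if t = w then 1 else 0

/-- The affine-functional vector of an edge. -/
def vec (e : GainEdge n) : (Fin n → ℚ) × ℚ := (uv e.2.1 - uv e.1, (e.2.2 : ℚ))

/-- The evaluation functional at `y`. -/
noncomputable def ev (y : Fin n → ℚ) : ((Fin n → ℚ) × ℚ) →ₗ[ℚ] ℚ where
  toFun p := (∑ v, p.1 v * y v) - p.2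
  map_add' p q := by
    simp only [Prod.fst_add, Prod.snd_add, Pi.add_apply, add_mul, Finset.sum_add_distrib]
    ring
  map_smul' c p := by
    simp only [Prod.smul_fst, Prod.smul_snd, Pi.smul_apply, smul_eq_mul, RingHom.id_apply,
      Finset.mul_sum, mul_sub, mul_assoc]

lemma ev_pair (y : Fin n → ℚ) (u v : Fin n) (c : ℚ) :
    ev y (uv v - uv u, c) = y v - y u - c := by
  simp only [ev, LinearMap.coe_mk, AddHom.coe_mk, Pi.sub_apply, uv, sub_mul, ite_mul, one_mul,
    zero_mul, Finset.sum_sub_distrib, Finset.sum_ite_eq', Finset.mem_univ, if_true]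

lemma ev_vec (y : Fin n → ℚ) (e : GainEdge n) :
    ev y (vec e) = y e.2.1 - y e.1 - e.2.2 := ev_pair y e.1 e.2.1 e.2.2

/-- If an edge's vector lies in the span of vectors of satisfied edges, the edge equation
also holds. -/
lemma sat_of_span (x : Fin n → ℤ) {U : Finset (GainEdge n)}
    (hU : ∀ s ∈ U, x s.2.1 = x s.1 + s.2.2) {e : GainEdge n}
    (he : vec e ∈ Submodule.span ℚ (vec '' (U : Set (GainEdge n)))) :
    x e.2.1 = x e.1 + e.2.2 := by
  set y : Fin n → ℚ := fun v => (x v : ℚ) with hy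
  have hker : Submodule.span ℚ (vec '' (U : Set (GainEdge n))) ≤ LinearMap.ker (ev y) := by
    rw [Submodule.span_le]
    rintro _ ⟨s, hs, rfl⟩
    rw [SetLike.mem_coe, LinearMap.mem_ker, ev_vec]
    have := hU s hs
    simp only [hy]
    push_cast [this]
    ring
  have := hker he
  rw [LinearMap.mem_ker, ev_vec] at this
  have : (x e.2.1 : ℚ) = (x e.1 : ℚ) + (e.2.2 : ℚ) := by simp only [hy] at this; linarith
  exact_mod_cast this

/-- A potential also "satisfies" equations in the span. -/
lemma span_le_ker {S : Finset (GainEdge n)} {θ : Fin n → ℤ} (hθ : Sat S θ) :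
    Submodule.span ℚ (vec '' (S : Set (GainEdge n))) ≤
      LinearMap.ker (ev fun v => (θ v : ℚ)) := by
  rw [Submodule.span_le]
  rintro _ ⟨s, hs, rfl⟩
  rw [SetLike.mem_coe, LinearMap.mem_ker, ev_vec]
  have := hθ s hs
  push_cast [this]
  ring

/-- An index function, injective on `E`. -/
noncomputable def idx (E : Finset (GainEdge n)) (e : GainEdge n) : ℕ :=
  if h : e ∈ E then (E.equivFin ⟨e, h⟩ : ℕ) else 0

lemma idx_inj {E : Finset (GainEdge n)} {e e' : GainEdge n} (he : e ∈ E) (he' : e' ∈ E)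
    (h : idx E e = idx E e') : e = e' := by
  rw [idx, dif_pos he, idx, dif_pos he'] at h
  have := E.equivFin.injective (Fin.val_injective h)
  exact congrArg Subtype.val this

/-- The strictly-greater window of `S` above `e`. -/
noncomputable def Upper (E S : Finset (GainEdge n)) (e : GainEdge n) : Finset (GainEdge n) :=
  S.filter fun s => idx E e < idx E s

lemma Upper_subset (E S : Finset (GainEdge n)) (e : GainEdge n) : Upper E S e ⊆ S :=
  Finset.filter_subset _ _

lemma Upper_mono {E S S' : Finset (GainEdge n)} (h : S ⊆ S') (e : GainEdge n) :
    Upper E S e ⊆ Upper E S' e := Finset.filter_subset_filter _ h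

/-- The set of edges of `E` whose vector lies in the span of strictly greater edges of `S`. -/
noncomputable def Dset (E S : Finset (GainEdge n)) : Finset (GainEdge n) :=
  E.filter fun e => vec e ∈ Submodule.span ℚ (vec '' ((Upper E S e : Finset (GainEdge n)) : Set (GainEdge n)))

lemma Dset_mono {E S S' : Finset (GainEdge n)} (h : S ⊆ S') : Dset E S ⊆ Dset E S' := by
  intro e he
  rw [Dset, Finset.mem_filter] at he ⊢
  refine ⟨he.1, Submodule.span_mono (Set.image_mono ?_) he.2⟩
  exact_mod_cast Upper_mono h e

lemma Upper_erase_self (E S : Finset (GainEdge n)) (e : GainEdge n) :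
    Upper E (S.erase e) e = Upper E S e := by
  apply Finset.ext
  intro s
  simp only [Upper, Finset.mem_filter, Finset.mem_erase]
  constructor
  · rintro ⟨⟨_, hs⟩, hlt⟩; exact ⟨hs, hlt⟩
  · rintro ⟨hs, hlt⟩
    refine ⟨⟨?_, hs⟩, hlt⟩
    rintro rfl; exact lt_irrefl _ hlt

lemma Upper_insert_self (E S : Finset (GainEdge n)) (e : GainEdge n) :
    Upper E (insert e S) e = Upper E S e := by
  apply Finset.ext
  intro s
  simp only [Upper, Finset.mem_filter, Finset.mem_insert]
  constructor
  · rintro ⟨h | hs, hlt⟩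
    · subst h; exact absurd hlt (lt_irrefl _)
    · exact ⟨hs, hlt⟩
  · rintro ⟨hs, hlt⟩; exact ⟨Or.inr hs, hlt⟩

/-- A not-broken-circuit set has no element in the span of the others. -/
lemma not_mem_span_erase {E S : Finset (GainEdge n)} (hSE : S ⊆ E) (hD : Dset E S = ∅)
    {e : GainEdge n} (he : e ∈ S) :
    vec e ∉ Submodule.span ℚ (vec '' ((S.erase e : Finset (GainEdge n)) : Set (GainEdge n))) := by
  intro hmem
  rw [Finsupp.mem_span_image_iff_linearCombination] at hmem
  obtain ⟨l, hl, hsum⟩ := hmem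
  rw [Finsupp.mem_supported] at hl
  set μ : GainEdge n →₀ ℚ := l - Finsupp.single e 1 with hμ
  have hμsum : Finsupp.linearCombination ℚ vec μ = 0 := by
    rw [hμ, map_sub, hsum, Finsupp.linearCombination_single, one_smul, sub_self]
  have hle : l e = 0 := by
    rw [← Finsupp.notMem_support_iff]
    intro hc
    exact (Finset.notMem_erase e S) (hl hc)
  have hμe : μ e = -1 := by simp [hμ, hle]
  have hsupp : (μ.support : Set (GainEdge n)) ⊆ (S : Set (GainEdge n)) := by
    intro s hs
    have := Finsupp.support_sub (f := l) (g := Finsupp.single e 1) hs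
    rw [Finset.mem_union] at this
    rcases this with h | h
    · exact Finset.coe_subset.mpr (Finset.erase_subset _ _) (hl h)
    · have := Finsupp.support_single_subset h
      simp only [Finset.mem_singleton] at this
      subst this; exact he
  have hne : μ.support.Nonempty := ⟨e, by rw [Finsupp.mem_support_iff, hμe]; norm_num⟩
  obtain ⟨s₀, hs₀, hmin⟩ := Finset.exists_min_image μ.support (idx E) hne
  have hs₀S : s₀ ∈ S := hsupp hs₀
  have hsolve : vec s₀ ∈ Submodule.span ℚ (vec '' ((Upper E S s₀ : Finset (GainEdge n)) : Set (GainEdge n))) := by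
    have hsum0 : ∑ s ∈ μ.support, μ s • vec s = 0 := by
      rw [← hμsum, Finsupp.linearCombination_apply, Finsupp.sum]
    have hsolve0 : μ s₀ • vec s₀ = - ∑ s ∈ μ.support.erase s₀, μ s • vec s := by
      rw [← Finset.add_sum_erase μ.support (fun s => μ s • vec s) hs₀] at hsum0
      exact eq_neg_of_add_eq_zero_left hsum0
    have hμs₀ : μ s₀ ≠ 0 := Finsupp.mem_support_iff.mp hs₀
    have : vec s₀ = (μ s₀)⁻¹ • (- ∑ s ∈ μ.support.erase s₀, μ s • vec s) := by
      rw [← hsolve0, smul_smul, inv_mul_cancel₀ hμs₀, one_smul]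
    rw [this]
    refine Submodule.smul_mem _ _ (Submodule.neg_mem _ (Submodule.sum_mem _ ?_))
    intro s hs
    refine Submodule.smul_mem _ _ (Submodule.subset_span ?_)
    refine ⟨s, ?_, rfl⟩
    rw [Finset.mem_erase] at hs
    have hsS : s ∈ S := hsupp hs.2
    rw [Finset.mem_coe, Upper, Finset.mem_filter]
    refine ⟨hsS, lt_of_le_of_ne (hmin s hs.2) ?_⟩
    intro hc
    exact hs.1 (idx_inj (hSE hs₀S) (hSE hsS) hc).symm
  have : s₀ ∈ Dset E S := by
    rw [Dset, Finset.mem_filter]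
    exact ⟨hSE hs₀S, hsolve⟩
  rw [hD] at this
  exact absurd this (Finset.notMem_empty _)

/-! ### The minimal element of `Dset` and the involution -/

noncomputable def e0 (hn : 0 < n) (E S : Finset (GainEdge n)) : GainEdge n :=
  if h : (Dset E S).Nonempty then
    Classical.choose (Finset.exists_min_image (Dset E S) (idx E) h)
  else (⟨0, hn⟩, ⟨0, hn⟩, 0)

lemma e0_spec (hn : 0 < n) {E S : Finset (GainEdge n)} (h : (Dset E S).Nonempty) :
    e0 hn E S ∈ Dset E S ∧ ∀ e ∈ Dset E S, idx E (e0 hn E S) ≤ idx E e := by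
  rw [e0, dif_pos h]
  obtain ⟨h1, h2⟩ := Classical.choose_spec (Finset.exists_min_image (Dset E S) (idx E) h)
  exact ⟨h1, h2⟩

noncomputable def flip (hn : 0 < n) (E S : Finset (GainEdge n)) : Finset (GainEdge n) :=
  if e0 hn E S ∈ S then S.erase (e0 hn E S) else insert (e0 hn E S) S

lemma Dset_mem_E {E S : Finset (GainEdge n)} {e : GainEdge n} (h : e ∈ Dset E S) : e ∈ E :=
  (Finset.mem_filter.mp h).1

lemma Dset_mem_span {E S : Finset (GainEdge n)} {e : GainEdge n} (h : e ∈ Dset E S) :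
    vec e ∈ Submodule.span ℚ (vec '' ((Upper E S e : Finset (GainEdge n)) : Set (GainEdge n))) :=
  (Finset.mem_filter.mp h).2

lemma Upper_flip (hn : 0 < n) (E S : Finset (GainEdge n)) :
    Upper E (flip hn E S) (e0 hn E S) = Upper E S (e0 hn E S) := by
  rw [flip]
  split_ifs with h
  · exact Upper_erase_self E S _
  · exact Upper_insert_self E S _

lemma e0_mem_Dset_flip (hn : 0 < n) {E S : Finset (GainEdge n)} (h : (Dset E S).Nonempty) :
    e0 hn E S ∈ Dset E (flip hn E S) := by
  obtain ⟨hmem, -⟩ := e0_spec hn h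
  rw [Dset, Finset.mem_filter]
  refine ⟨Dset_mem_E hmem, ?_⟩
  rw [Upper_flip]
  exact Dset_mem_span hmem

lemma sat_flip_iff (hn : 0 < n) {E S : Finset (GainEdge n)} (h : (Dset E S).Nonempty)
    (x : Fin n → ℤ) : Sat S x ↔ Sat (flip hn E S) x := by
  obtain ⟨hmem, -⟩ := e0_spec hn h
  have hspan := Dset_mem_span hmem
  set a := e0 hn E S with ha
  have key : ∀ T : Finset (GainEdge n), Upper E S a ⊆ T → Sat T x →
      x a.2.1 = x a.1 + a.2.2 := by
    intro T hsub hT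
    exact sat_of_span x (fun s hs => hT s (hsub hs)) hspan
  rw [flip, ← ha]
  split_ifs with hmemS
  · constructor
    · intro hS s hs
      exact hS s (Finset.erase_subset _ _ hs)
    · intro hS' s hs
      by_cases hsa : s = a
      · rw [hsa]
        refine key (S.erase a) ?_ hS'
        intro u hu
        rw [Finset.mem_erase]
        rw [Upper, Finset.mem_filter] at hu
        refine ⟨?_, hu.1⟩
        rintro rfl; exact lt_irrefl _ hu.2
      · exact hS' s (Finset.mem_erase.mpr ⟨hsa, hs⟩)
  · constructor
    · intro hS s hs
      rcases Finset.mem_insert.mp hs with rfl | hs'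
      · exact key S (Upper_subset E S a) hS
      · exact hS s hs'
    · intro hS' s hs
      exact hS' s (Finset.mem_insert_of_mem hs)

lemma e0_min_flip (hn : 0 < n) {E S : Finset (GainEdge n)} (hSE : S ⊆ E)
    (h : (Dset E S).Nonempty) :
    ∀ e ∈ Dset E (flip hn E S), idx E (e0 hn E S) ≤ idx E e := by
  obtain ⟨hmem, hmin⟩ := e0_spec hn h
  set a := e0 hn E S with ha
  intro e heD
  by_contra hcon
  push_neg at hcon
  -- show e ∈ Dset E S, contradicting minimality
  have heDS : e ∈ Dset E S := by
    rw [Dset, Finset.mem_filter]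
    refine ⟨Dset_mem_E heD, ?_⟩
    have hspan' := Dset_mem_span heD
    rw [flip, ← ha] at hspan'
    split_ifs at hspan' with hmemS
    · refine Submodule.span_mono (Set.image_mono ?_) hspan'
      exact_mod_cast Upper_mono (Finset.erase_subset _ _) e
    · have hupper : Upper E (insert a S) e = insert a (Upper E S e) := by
        rw [Upper, Finset.filter_insert, if_pos hcon]
        rfl
      rw [hupper] at hspan'
      have hmemspan : vec a ∈ Submodule.span ℚ (vec '' ((Upper E S e : Finset (GainEdge n)) : Set (GainEdge n))) := by
        refine Submodule.span_mono (Set.image_mono ?_) (Dset_mem_span hmem)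
        intro u hu
        rw [Finset.mem_coe, Upper, Finset.mem_filter] at hu ⊢
        exact ⟨hu.1, lt_trans hcon hu.2⟩
      rw [Finset.coe_insert, Set.image_insert_eq, Submodule.span_insert_eq_span hmemspan]
        at hspan'
      exact hspan'
  exact absurd (hmin e heDS) (not_le.mpr hcon)

lemma flip_flip (hn : 0 < n) {E S : Finset (GainEdge n)} (hSE : S ⊆ E)
    (h : (Dset E S).Nonempty) : flip hn E (flip hn E S) = S := by
  have hne' : (Dset E (flip hn E S)).Nonempty := ⟨_, e0_mem_Dset_flip hn h⟩
  obtain ⟨hmem', hmin'⟩ := e0_spec hn hne'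
  have hae : e0 hn E (flip hn E S) = e0 hn E S := by
    have h1 : idx E (e0 hn E S) ≤ idx E (e0 hn E (flip hn E S)) :=
      e0_min_flip hn hSE h _ hmem'
    have h2 : idx E (e0 hn E (flip hn E S)) ≤ idx E (e0 hn E S) :=
      hmin' _ (e0_mem_Dset_flip hn h)
    exact idx_inj (Dset_mem_E hmem') (Dset_mem_E (e0_spec hn h).1) (le_antisymm h2 h1)
  rw [flip, hae]
  rw [flip]
  split_ifs with h1 h2 h2
  · exact absurd (Finset.mem_erase.mp h2).1 (by simp)
  · exact Finset.insert_erase h1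
  · exact Finset.erase_insert h1
  · exact absurd (Finset.mem_insert_self _ _) h2

/-! ### Inclusion–exclusion -/

lemma N_cast_sum (S : Finset (GainEdge n)) (m : ℤ) :
    (N S m : ℤ) = ∑ x ∈ Box n m, if Sat S x then (1 : ℤ) else 0 := by
  rw [N, Finset.card_filter]
  push_cast
  rfl

lemma properCount_eq (E : Finset (GainEdge n)) (m : ℤ) :
    (properCount E m : ℤ) = ∑ S ∈ E.powerset, (-1 : ℤ) ^ S.card * (N S m : ℤ) := by
  have h1 : properCount E m = ((Box n m).filter fun x => ProperFor E x).card := by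
    rw [properCount, ← Nat.card_eq_finsetCard]
    apply Nat.card_congr
    apply Equiv.subtypeEquivRight
    intro x
    rw [Finset.mem_filter, mem_Box]
  have key : ∀ x ∈ Box n m,
      (∑ S ∈ E.powerset, (-1 : ℤ) ^ S.card * (if Sat S x then (1 : ℤ) else 0)) =
        if ProperFor E x then (1 : ℤ) else 0 := by
    intro x _
    have h2 : ∀ S : Finset (GainEdge n),
        (-1 : ℤ) ^ S.card * (if Sat S x then (1 : ℤ) else 0) =
          if Sat S x then (-1 : ℤ) ^ S.card else 0 := by
      intro S; split_ifs <;> ring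
    simp_rw [h2]
    rw [← Finset.sum_filter]
    have h3 : E.powerset.filter (fun S => Sat S x) =
        (E.filter fun e => x e.2.1 = x e.1 + e.2.2).powerset := by
      apply Finset.ext
      intro S
      simp only [Finset.mem_filter, Finset.mem_powerset]
      constructor
      · rintro ⟨hSE, hsat⟩ s hs
        exact Finset.mem_filter.mpr ⟨hSE hs, hsat s hs⟩
      · intro hsub
        constructor
        · exact hsub.trans (Finset.filter_subset _ _)
        · intro s hs
          exact (Finset.mem_filter.mp (hsub hs)).2
    rw [h3, Finset.sum_powerset_neg_one_pow_card]
    congr 1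
    rw [Finset.filter_eq_empty_iff]
    constructor <;> intro hp e he <;> exact hp e he
  calc (properCount E m : ℤ)
      = ∑ x ∈ Box n m, if ProperFor E x then (1 : ℤ) else 0 := by
        rw [h1, Finset.sum_boole]
    _ = ∑ x ∈ Box n m, ∑ S ∈ E.powerset, (-1 : ℤ) ^ S.card * (if Sat S x then (1 : ℤ) else 0) := by
        refine Finset.sum_congr rfl fun x hx => (key x hx).symm
    _ = ∑ S ∈ E.powerset, ∑ x ∈ Box n m, (-1 : ℤ) ^ S.card * (if Sat S x then (1 : ℤ) else 0) :=
        Finset.sum_comm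
    _ = ∑ S ∈ E.powerset, (-1 : ℤ) ^ S.card * (N S m : ℤ) := by
        refine Finset.sum_congr rfl fun S _ => ?_
        rw [N_cast_sum, Finset.mul_sum]

lemma N_congr {S S' : Finset (GainEdge n)} (h : ∀ x, Sat S x ↔ Sat S' x) (m : ℤ) :
    N S m = N S' m := by
  rw [N, N]
  congr 1
  apply Finset.filter_congr
  intro x _
  exact h x

/-- The involution step: cancel all subsets with nonempty `Dset`. -/
lemma step_cancel (hn : 0 < n) (E : Finset (GainEdge n)) (m : ℤ) :
    (∑ S ∈ E.powerset, (-1 : ℤ) ^ S.card * (N S m : ℤ)) =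
      ∑ S ∈ E.powerset.filter (fun S => Dset E S = ∅), (-1 : ℤ) ^ S.card * (N S m : ℤ) := by
  rw [← Finset.sum_filter_add_sum_filter_not E.powerset (fun S => Dset E S = ∅)]
  have h0 : (∑ S ∈ E.powerset.filter (fun S => ¬ Dset E S = ∅),
      (-1 : ℤ) ^ S.card * (N S m : ℤ)) = 0 := by
    refine Finset.sum_involution (fun S _ => flip hn E S) ?_ ?_ ?_ ?_
    · intro S hS
      rw [Finset.mem_filter, Finset.mem_powerset] at hS
      have hne : (Dset E S).Nonempty := Finset.nonempty_iff_ne_empty.mpr hS.2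
      have hN : N S m = N (flip hn E S) m := N_congr (sat_flip_iff hn hne) m
      have hcard : (flip hn E S).card = S.card + 1 ∨ S.card = (flip hn E S).card + 1 := by
        rw [flip]
        split_ifs with hmem
        · right; exact (Finset.card_erase_add_one hmem).symm
        · left; exact Finset.card_insert_of_notMem hmem
      rw [← hN]
      rcases hcard with hc | hc <;> rw [hc] <;> ring
    · intro S hS _
      rw [Finset.mem_filter, Finset.mem_powerset] at hS
      have hne : (Dset E S).Nonempty := Finset.nonempty_iff_ne_empty.mpr hS.2
      rw [flip]
      split_ifs with hmem
      · intro hc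
        have h' := Finset.notMem_erase (e0 hn E S) S
        rw [hc] at h'
        exact h' hmem
      · intro hc
        have h' := Finset.mem_insert_self (e0 hn E S) S
        rw [hc] at h'
        exact hmem h'
    · intro S hS
      rw [Finset.mem_filter, Finset.mem_powerset] at hS
      have hne : (Dset E S).Nonempty := Finset.nonempty_iff_ne_empty.mpr hS.2
      rw [Finset.mem_filter, Finset.mem_powerset]
      constructor
      · rw [flip]
        split_ifs with hmem
        · exact (Finset.erase_subset _ _).trans hS.1
        · exact Finset.insert_subset (Dset_mem_E (e0_spec hn hne).1) hS.1
      · exact Finset.nonempty_iff_ne_empty.mp ⟨_, e0_mem_Dset_flip hn hne⟩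
    · intro S hS
      rw [Finset.mem_filter, Finset.mem_powerset] at hS
      have hne : (Dset E S).Nonempty := Finset.nonempty_iff_ne_empty.mpr hS.2
      exact flip_flip hn hS.1 hne
  rw [h0, add_zero]

/-! ### Components, representatives, and counting -/

noncomputable def thS (S : Finset (GainEdge n)) : Fin n → ℤ :=
  if h : ∃ x : Fin n → ℤ, Sat S x then h.choose else 0

lemma thS_sat {S : Finset (GainEdge n)} (h : ∃ x, Sat S x) : Sat S (thS S) := by
  rw [thS, dif_pos h]; exact h.choose_spec

lemma sameComp_refl (S : Finset (GainEdge n)) (v : Fin n) : SameComp S v v :=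
  Relation.EqvGen.refl v

lemma sameComp_symm {S : Finset (GainEdge n)} {u v : Fin n} (h : SameComp S u v) :
    SameComp S v u := Relation.EqvGen.symm _ _ h

lemma sameComp_trans {S : Finset (GainEdge n)} {u v w : Fin n} (h1 : SameComp S u v)
    (h2 : SameComp S v w) : SameComp S u w := Relation.EqvGen.trans _ _ _ h1 h2

lemma sameComp_mono {S T : Finset (GainEdge n)} (h : S ⊆ T) {u v : Fin n}
    (hs : SameComp S u v) : SameComp T u v := by
  induction hs with
  | rel a b hab => obtain ⟨g, hg⟩ := hab; exact Relation.EqvGen.rel a b ⟨g, h hg⟩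
  | refl a => exact Relation.EqvGen.refl a
  | symm a b _ ih => exact Relation.EqvGen.symm _ _ ih
  | trans a b c _ _ ih1 ih2 => exact Relation.EqvGen.trans _ _ _ ih1 ih2

noncomputable def block (S : Finset (GainEdge n)) (v : Fin n) : Finset (Fin n) :=
  Finset.univ.filter fun u => SameComp S u v

lemma mem_block {S : Finset (GainEdge n)} {u v : Fin n} : u ∈ block S v ↔ SameComp S u v := by
  simp [block]

lemma block_nonempty (S : Finset (GainEdge n)) (v : Fin n) : (block S v).Nonempty :=
  ⟨v, mem_block.mpr (sameComp_refl S v)⟩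

lemma block_congr {S : Finset (GainEdge n)} {u v : Fin n} (h : SameComp S u v) :
    block S u = block S v := by
  ext w
  rw [mem_block, mem_block]
  exact ⟨fun hw => sameComp_trans hw h, fun hw => sameComp_trans hw (sameComp_symm h)⟩

noncomputable def rep (S : Finset (GainEdge n)) (v : Fin n) : Fin n :=
  (block S v).min' (block_nonempty S v)

lemma min'_congr {α : Type*} [LinearOrder α] {s t : Finset α} (h : s = t) (hs : s.Nonempty) :
    s.min' hs = t.min' (h ▸ hs) := by subst h; rfl

lemma rep_mem_block (S : Finset (GainEdge n)) (v : Fin n) : rep S v ∈ block S v :=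
  Finset.min'_mem _ _

lemma rep_sameComp (S : Finset (GainEdge n)) (v : Fin n) : SameComp S (rep S v) v :=
  mem_block.mp (rep_mem_block S v)

lemma rep_congr {S : Finset (GainEdge n)} {u v : Fin n} (h : SameComp S u v) :
    rep S u = rep S v := min'_congr (block_congr h) _

lemma rep_idem (S : Finset (GainEdge n)) (v : Fin n) : rep S (rep S v) = rep S v :=
  rep_congr (rep_sameComp S v)

noncomputable def Rset (S : Finset (GainEdge n)) : Finset (Fin n) :=
  Finset.univ.filter fun v => rep S v = v

lemma mem_Rset {S : Finset (GainEdge n)} {v : Fin n} : v ∈ Rset S ↔ rep S v = v := by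
  simp [Rset]

lemma rep_mem_Rset (S : Finset (GainEdge n)) (v : Fin n) : rep S v ∈ Rset S :=
  mem_Rset.mpr (rep_idem S v)

noncomputable def Mx (S : Finset (GainEdge n)) (v : Fin n) : ℤ :=
  (block S v).sup' (block_nonempty S v) (thS S)

noncomputable def Mn (S : Finset (GainEdge n)) (v : Fin n) : ℤ :=
  (block S v).inf' (block_nonempty S v) (thS S)

noncomputable def wv (S : Finset (GainEdge n)) (v : Fin n) : ℕ := (Mx S v - Mn S v).toNat

lemma Mn_le_th (S : Finset (GainEdge n)) {u v : Fin n} (h : u ∈ block S v) :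
    Mn S v ≤ thS S u := Finset.inf'_le _ h

lemma th_le_Mx (S : Finset (GainEdge n)) {u v : Fin n} (h : u ∈ block S v) :
    thS S u ≤ Mx S v := Finset.le_sup' _ h

lemma Mn_le_Mx (S : Finset (GainEdge n)) (v : Fin n) : Mn S v ≤ Mx S v :=
  le_trans (Mn_le_th S (mem_block.mpr (sameComp_refl S v)))
    (th_le_Mx S (mem_block.mpr (sameComp_refl S v)))

lemma wv_cast (S : Finset (GainEdge n)) (v : Fin n) :
    ((wv S v : ℕ) : ℤ) = Mx S v - Mn S v :=
  Int.toNat_of_nonneg (sub_nonneg.mpr (Mn_le_Mx S v))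

lemma sat_sub_const {S : Finset (GainEdge n)} {x y : Fin n → ℤ} (hx : Sat S x) (hy : Sat S y)
    {u v : Fin n} (h : SameComp S u v) : x u - y u = x v - y v := by
  induction h with
  | rel a b hab =>
    obtain ⟨g, hg⟩ := hab
    have h1 := hx _ hg
    have h2 := hy _ hg
    simp only at h1 h2
    omega
  | refl a => rfl
  | symm a b _ ih => omega
  | trans a b c _ _ ih1 ih2 => omega

lemma sameComp_empty {u v : Fin n} : SameComp (∅ : Finset (GainEdge n)) u v ↔ u = v := by
  constructor
  · intro h
    induction h with
    | rel a b hab => obtain ⟨g, hg⟩ := hab; exact absurd hg (Finset.notMem_empty _)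
    | refl a => rfl
    | symm a b _ ih => exact ih.symm
    | trans a b c _ _ ih1 ih2 => exact ih1.trans ih2
  · rintro rfl; exact sameComp_refl _ _

lemma block_empty (v : Fin n) : block (∅ : Finset (GainEdge n)) v = {v} := by
  ext u; simp [mem_block, sameComp_empty]

lemma rep_empty (v : Fin n) : rep (∅ : Finset (GainEdge n)) v = v := by
  rw [rep, min'_congr (block_empty v)]
  exact Finset.min'_singleton v

lemma Rset_empty : Rset (∅ : Finset (GainEdge n)) = Finset.univ := by
  ext v; simp [mem_Rset, rep_empty]

lemma wv_empty (v : Fin n) : wv (∅ : Finset (GainEdge n)) v = 0 := by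
  have hMx : Mx (∅ : Finset (GainEdge n)) v = thS (∅ : Finset (GainEdge n)) v := by
    refine le_antisymm (Finset.sup'_le _ _ ?_) (th_le_Mx _ (mem_block.mpr (sameComp_refl _ v)))
    intro u hu
    rw [mem_block, sameComp_empty] at hu
    subst hu; exact le_refl _
  have hMn : Mn (∅ : Finset (GainEdge n)) v = thS (∅ : Finset (GainEdge n)) v := by
    refine le_antisymm (Mn_le_th _ (mem_block.mpr (sameComp_refl _ v))) (Finset.le_inf' _ _ ?_)
    intro u hu
    rw [mem_block, sameComp_empty] at hu
    subst hu; exact le_refl _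
  rw [wv, hMx, hMn, sub_self]
  rfl

/-! ### The counting formula -/

lemma N_eq (S : Finset (GainEdge n)) (hcons : ∃ x, Sat S x) (m : ℤ) :
    N S m = ∏ v ∈ Rset S, (m - ((wv S v : ℕ) : ℤ)).toNat := by
  have hth : Sat S (thS S) := thS_sat hcons
  have hcard : N S m = (Fintype.piFinset (fun v : {v // v ∈ Rset S} =>
      Finset.Icc (1 - Mn S v.1) (m - Mx S v.1))).card := by
    rw [N]
    refine Finset.card_bij' (fun x _ => fun v => x v.1 - thS S v.1)
      (fun y _ => fun u => thS S u + y ⟨rep S u, rep_mem_Rset S u⟩) ?_ ?_ ?_ ?_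
    · intro x hx
      rw [Finset.mem_filter, mem_Box] at hx
      obtain ⟨hbox, hsat⟩ := hx
      rw [Fintype.mem_piFinset]
      intro v
      rw [Finset.mem_Icc]
      constructor
      · have : 1 - (x v.1 - thS S v.1) ≤ Mn S v.1 := by
          refine Finset.le_inf' _ _ ?_
          intro u hu
          have hc := sat_sub_const hsat hth (mem_block.mp hu)
          have := (hbox u).1
          omega
        omega
      · have : Mx S v.1 ≤ m - (x v.1 - thS S v.1) := by
          refine Finset.sup'_le _ _ ?_
          intro u hu
          have hc := sat_sub_const hsat hth (mem_block.mp hu)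
          have := (hbox u).2
          omega
        omega
    · intro y hy
      rw [Fintype.mem_piFinset] at hy
      rw [Finset.mem_filter, mem_Box]
      constructor
      · intro u
        have h1 := hy ⟨rep S u, rep_mem_Rset S u⟩
        rw [Finset.mem_Icc] at h1
        have hub : u ∈ block S (rep S u) :=
          mem_block.mpr (sameComp_symm (rep_sameComp S u))
        have h2 := Mn_le_th S hub
        have h3 := th_le_Mx S hub
        constructor <;> simp only at h1 h2 h3 ⊢ <;> omega
      · intro e he
        have hrep : rep S e.1 = rep S e.2.1 :=
          rep_congr (Relation.EqvGen.rel _ _ ⟨e.2.2, by simpa using he⟩)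
        have hθ := hth e he
        simp only [hrep]
        omega
    · intro x hx
      dsimp only
      funext u
      rw [Finset.mem_filter, mem_Box] at hx
      have hc := sat_sub_const hx.2 hth (sameComp_symm (rep_sameComp S u))
      omega
    · intro y hy
      dsimp only
      funext v
      have hv : rep S v.1 = v.1 := mem_Rset.mp v.2
      simp only [add_sub_cancel_left]
      congr 1
      exact Subtype.ext hv
  rw [hcard, Fintype.card_piFinset, ← Finset.prod_coe_sort (Rset S)]
  refine Finset.prod_congr rfl ?_
  intro v _
  rw [Int.card_Icc, wv_cast]
  congr 1
  ring

lemma N_cast (S : Finset (GainEdge n)) (hcons : ∃ x, Sat S x) (m : ℤ) :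
    (N S m : ℤ) = if (∀ v ∈ Rset S, ((wv S v : ℕ) : ℤ) ≤ m)
      then ∏ v ∈ Rset S, (m - ((wv S v : ℕ) : ℤ)) else 0 := by
  rw [N_eq S hcons m]
  split_ifs with h
  · push_cast
    refine Finset.prod_congr rfl ?_
    intro v hv
    exact Int.toNat_of_nonneg (by have := h v hv; omega)
  · push_neg at h
    obtain ⟨v, hv, hlt⟩ := h
    have : ((m - ((wv S v : ℕ) : ℤ)).toNat : ℤ) = 0 := by
      rw [Int.toNat_of_nonpos (by omega)]
      rfl
    push_cast
    refine Finset.prod_eq_zero hv ?_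
    exact_mod_cast this

/-! ### Paths give spans; rank counting -/

lemma span_of_sameComp {T : Finset (GainEdge n)} {u v : Fin n} (h : SameComp T u v) :
    ∃ c : ℚ, ((uv v - uv u, c) : (Fin n → ℚ) × ℚ) ∈
      Submodule.span ℚ (vec '' (T : Set (GainEdge n))) := by
  induction h with
  | rel a b hab =>
    obtain ⟨g, hg⟩ := hab
    exact ⟨g, Submodule.subset_span ⟨(a, b, g), hg, rfl⟩⟩
  | refl a =>
    refine ⟨0, ?_⟩
    have h0 : ((uv a - uv a, (0 : ℚ)) : (Fin n → ℚ) × ℚ) = 0 := by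
      rw [Prod.ext_iff]
      constructor
      · simp
      · rfl
    rw [h0]
    exact Submodule.zero_mem _
  | symm a b _ ih =>
    obtain ⟨c, hc⟩ := ih
    refine ⟨-c, ?_⟩
    have hneg := Submodule.neg_mem _ hc
    have h0 : -((uv b - uv a, c) : (Fin n → ℚ) × ℚ) = (uv a - uv b, -c) := by
      rw [Prod.ext_iff]
      constructor
      · show -(uv b - uv a) = uv a - uv b
        abel
      · rfl
    rwa [h0] at hneg
  | trans a b c' _ _ ih1 ih2 =>
    obtain ⟨c1, hc1⟩ := ih1
    obtain ⟨c2, hc2⟩ := ih2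
    refine ⟨c1 + c2, ?_⟩
    have hadd := Submodule.add_mem _ hc1 hc2
    have h0 : ((uv b - uv a, c1) : (Fin n → ℚ) × ℚ) + (uv c' - uv b, c2) =
        (uv c' - uv a, c1 + c2) := by
      rw [Prod.ext_iff]
      constructor
      · show (uv b - uv a) + (uv c' - uv b) = uv c' - uv a
        abel
      · rfl
    rwa [h0] at hadd

lemma sameComp_insert {e : GainEdge n} {T : Finset (GainEdge n)}
    (hnc : ¬ SameComp T e.1 e.2.1) {u v : Fin n} :
    SameComp (insert e T) u v ↔ SameComp T u v ∨
      (SameComp T u e.1 ∧ SameComp T e.2.1 v) ∨ (SameComp T u e.2.1 ∧ SameComp T e.1 v) := by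
  constructor
  · intro h
    induction h with
    | rel a b hab =>
      obtain ⟨g, hg⟩ := hab
      rcases Finset.mem_insert.mp hg with heq | hmem
      · refine Or.inr (Or.inl ⟨?_, ?_⟩)
        · rw [← heq]; exact sameComp_refl T a
        · rw [← heq]; exact sameComp_refl T b
      · exact Or.inl (Relation.EqvGen.rel a b ⟨g, hmem⟩)
    | refl a => exact Or.inl (sameComp_refl T a)
    | symm a b _ ih =>
      rcases ih with h | ⟨h1, h2⟩ | ⟨h1, h2⟩
      · exact Or.inl (sameComp_symm h)
      · exact Or.inr (Or.inr ⟨sameComp_symm h2, sameComp_symm h1⟩)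
      · exact Or.inr (Or.inl ⟨sameComp_symm h2, sameComp_symm h1⟩)
    | trans a b c _ _ ih1 ih2 =>
      rcases ih1 with h | ⟨h1, h2⟩ | ⟨h1, h2⟩ <;> rcases ih2 with h' | ⟨h1', h2'⟩ | ⟨h1', h2'⟩
      · exact Or.inl (sameComp_trans h h')
      · exact Or.inr (Or.inl ⟨sameComp_trans h h1', h2'⟩)
      · exact Or.inr (Or.inr ⟨sameComp_trans h h1', h2'⟩)
      · exact Or.inr (Or.inl ⟨h1, sameComp_trans h2 h'⟩)
      · exact absurd (sameComp_symm (sameComp_trans h2 h1')) hnc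
      · exact Or.inl (sameComp_trans h1 h2')
      · exact Or.inr (Or.inr ⟨h1, sameComp_trans h2 h'⟩)
      · exact Or.inl (sameComp_trans h1 h2')
      · exact absurd (sameComp_trans h2 h1') hnc
  · have hedge : SameComp (insert e T) e.1 e.2.1 :=
      Relation.EqvGen.rel _ _ ⟨e.2.2, Finset.mem_insert_self e T⟩
    rintro (h | ⟨h1, h2⟩ | ⟨h1, h2⟩)
    · exact sameComp_mono (Finset.subset_insert e T) h
    · exact sameComp_trans (sameComp_mono (Finset.subset_insert e T) h1)
        (sameComp_trans hedge (sameComp_mono (Finset.subset_insert e T) h2))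
    · exact sameComp_trans (sameComp_mono (Finset.subset_insert e T) h1)
        (sameComp_trans (sameComp_symm hedge) (sameComp_mono (Finset.subset_insert e T) h2))

lemma block_insert_untouched {e : GainEdge n} {T : Finset (GainEdge n)}
    (hnc : ¬ SameComp T e.1 e.2.1) {v : Fin n} (hv1 : ¬ SameComp T v e.1)
    (hv2 : ¬ SameComp T v e.2.1) : block (insert e T) v = block T v := by
  ext u
  rw [mem_block, mem_block, sameComp_insert hnc]
  constructor
  · rintro (h | ⟨h1, h2⟩ | ⟨h1, h2⟩)
    · exact h
    · exact absurd (sameComp_symm h2) hv2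
    · exact absurd (sameComp_symm h2) hv1
  · exact Or.inl

lemma rep_insert_untouched {e : GainEdge n} {T : Finset (GainEdge n)}
    (hnc : ¬ SameComp T e.1 e.2.1) {v : Fin n} (hv1 : ¬ SameComp T v e.1)
    (hv2 : ¬ SameComp T v e.2.1) : rep (insert e T) v = rep T v :=
  min'_congr (block_insert_untouched hnc hv1 hv2) _

lemma block_insert_touched {e : GainEdge n} {T : Finset (GainEdge n)}
    (hnc : ¬ SameComp T e.1 e.2.1) {v : Fin n}
    (hv : SameComp T v e.1 ∨ SameComp T v e.2.1) :
    block (insert e T) v = block T e.1 ∪ block T e.2.1 := by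
  ext u
  rw [mem_block, Finset.mem_union, mem_block, mem_block, sameComp_insert hnc]
  constructor
  · rintro (h | ⟨h1, h2⟩ | ⟨h1, h2⟩)
    · rcases hv with hv | hv
      · exact Or.inl (sameComp_trans h hv)
      · exact Or.inr (sameComp_trans h hv)
    · exact Or.inl h1
    · exact Or.inr h1
  · rintro (h | h)
    · rcases hv with hv | hv
      · exact Or.inl (sameComp_trans h (sameComp_symm hv))
      · exact Or.inr (Or.inl ⟨h, sameComp_symm hv⟩)
    · rcases hv with hv | hv
      · exact Or.inr (Or.inr ⟨h, sameComp_symm hv⟩)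
      · exact Or.inl (sameComp_trans h (sameComp_symm hv))

lemma rep_insert_touched {e : GainEdge n} {T : Finset (GainEdge n)}
    (hnc : ¬ SameComp T e.1 e.2.1) {v : Fin n}
    (hv : SameComp T v e.1 ∨ SameComp T v e.2.1) :
    rep (insert e T) v = min (rep T e.1) (rep T e.2.1) := by
  rw [rep, min'_congr (block_insert_touched hnc hv)]
  apply le_antisymm
  · apply Finset.min'_le
    rcases le_total (rep T e.1) (rep T e.2.1) with h | h
    · rw [min_eq_left h]; exact Finset.mem_union_left _ (rep_mem_block T e.1)
    · rw [min_eq_right h]; exact Finset.mem_union_right _ (rep_mem_block T e.2.1)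
  · apply Finset.le_min'
    intro u hu
    rcases Finset.mem_union.mp hu with h | h
    · exact le_trans (min_le_left _ _) (Finset.min'_le _ _ h)
    · exact le_trans (min_le_right _ _) (Finset.min'_le _ _ h)

lemma Rset_insert_card {e : GainEdge n} {T : Finset (GainEdge n)} (he : e ∉ T)
    (hnc : ¬ SameComp T e.1 e.2.1) :
    (Rset (insert e T)).card + 1 = (Rset T).card := by
  have hab : rep T e.1 ≠ rep T e.2.1 := by
    intro h
    apply hnc
    have h1 : SameComp T e.1 (rep T e.1) := sameComp_symm (rep_sameComp T e.1)
    have h2 : SameComp T (rep T e.2.1) e.2.1 := rep_sameComp T e.2.1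
    rw [← h] at h2
    exact sameComp_trans h1 h2
  have haR : rep T e.1 ∈ Rset T := rep_mem_Rset T e.1
  have hbR : rep T e.2.1 ∈ Rset T := rep_mem_Rset T e.2.1
  have hacross : ¬ SameComp T (rep T e.1) e.2.1 := fun h =>
    hnc (sameComp_trans (sameComp_symm (rep_sameComp T e.1)) h)
  have hbcross : ¬ SameComp T (rep T e.2.1) e.1 := fun h =>
    hnc (sameComp_trans (sameComp_symm h) (rep_sameComp T e.2.1))
  have hset : Rset (insert e T) = (Rset T).erase (max (rep T e.1) (rep T e.2.1)) := by
    ext v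
    rw [Finset.mem_erase, mem_Rset, mem_Rset]
    by_cases hv1 : SameComp T v e.1
    · have hrep := rep_insert_touched hnc (Or.inl hv1)
      have hrv : rep T v = rep T e.1 := rep_congr hv1
      rw [hrep, hrv]
      rcases le_total (rep T e.1) (rep T e.2.1) with hle | hle
      · rw [min_eq_left hle, max_eq_right hle]
        constructor
        · intro h
          refine ⟨?_, h⟩
          rw [← h]
          exact hab
        · exact fun h => h.2
      · rw [min_eq_right hle, max_eq_left hle]
        constructor
        · intro h
          exfalso
          apply hbcross
          rw [h]
          exact hv1
        · rintro ⟨hne, h⟩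
          exact absurd h.symm hne
    · by_cases hv2 : SameComp T v e.2.1
      · have hrep := rep_insert_touched hnc (Or.inr hv2)
        have hrv : rep T v = rep T e.2.1 := rep_congr hv2
        rw [hrep, hrv]
        rcases le_total (rep T e.1) (rep T e.2.1) with hle | hle
        · rw [min_eq_left hle, max_eq_right hle]
          constructor
          · intro h
            exfalso
            apply hacross
            rw [h]
            exact hv2
          · rintro ⟨hne, h⟩
            exact absurd h.symm hne
        · rw [min_eq_right hle, max_eq_left hle]
          constructor
          · intro h
            refine ⟨?_, h⟩
            rw [← h]
            exact fun hc => hab hc.symm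
          · exact fun h => h.2
      · have hrep := rep_insert_untouched hnc hv1 hv2
        rw [hrep]
        constructor
        · intro h
          refine ⟨?_, h⟩
          intro hc
          rcases max_choice (rep T e.1) (rep T e.2.1) with hm | hm
          · rw [hm] at hc
            apply hv1
            rw [hc]
            exact rep_sameComp T e.1
          · rw [hm] at hc
            apply hv2
            rw [hc]
            exact rep_sameComp T e.2.1
        · exact fun h => h.2
  rw [hset]
  apply Finset.card_erase_add_one
  rcases max_choice (rep T e.1) (rep T e.2.1) with hm | hm <;> rw [hm]
  · exact haR
  · exact hbR

lemma not_sameComp_erase {E S : Finset (GainEdge n)} (hSE : S ⊆ E) (hD : Dset E S = ∅)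
    (hcons : ∃ x, Sat S x) {e : GainEdge n} (he : e ∈ S) :
    ¬ SameComp (S.erase e) e.1 e.2.1 := by
  intro hsc
  obtain ⟨c, hc⟩ := span_of_sameComp hsc
  by_cases hcg : c = (e.2.2 : ℚ)
  · subst hcg
    exact not_mem_span_erase hSE hD he hc
  · obtain ⟨θ, hθ⟩ := hcons
    have h1 : vec e ∈ Submodule.span ℚ (vec '' (S : Set (GainEdge n))) :=
      Submodule.subset_span ⟨e, he, rfl⟩
    have h2 : ((uv e.2.1 - uv e.1, c) : (Fin n → ℚ) × ℚ) ∈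
        Submodule.span ℚ (vec '' (S : Set (GainEdge n))) := by
      refine Submodule.span_mono (Set.image_mono ?_) hc
      exact_mod_cast Finset.erase_subset e S
    have h3 := Submodule.sub_mem _ h1 h2
    have h4 := span_le_ker hθ h3
    rw [LinearMap.mem_ker, map_sub, ev_vec, ev_pair] at h4
    apply hcg
    linarith

lemma Rset_card (E : Finset (GainEdge n)) (hn : 0 < n) :
    ∀ S : Finset (GainEdge n), S ⊆ E → Dset E S = ∅ → (∃ x, Sat S x) →
      (Rset S).card + S.card = n := by
  intro S
  induction S using Finset.strongInduction with
  | H S ih =>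
    intro hSE hD hcons
    rcases S.eq_empty_or_nonempty with rfl | ⟨e, he⟩
    · rw [Rset_empty]
      simp
    · have hsub : S.erase e ⊂ S := Finset.erase_ssubset he
      have hD' : Dset E (S.erase e) = ∅ := by
        have hsub2 : Dset E (S.erase e) ⊆ ∅ := hD ▸ Dset_mono (Finset.erase_subset e S)
        exact Finset.subset_empty.mp hsub2
      have hcons' : ∃ x, Sat (S.erase e) x :=
        ⟨hcons.choose, fun s hs => hcons.choose_spec s (Finset.erase_subset e S hs)⟩
      have hT := ih _ hsub ((Finset.erase_subset e S).trans hSE) hD' hcons'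
      have hnc := not_sameComp_erase hSE hD hcons he
      have hins := Rset_insert_card (Finset.notMem_erase e S) hnc
      rw [Finset.insert_erase he] at hins
      have hce : (S.erase e).card + 1 = S.card := Finset.card_erase_add_one he
      omega

/-! ### Empty `Dset` for the empty set; sorted-list plumbing -/

lemma vec_ne_zero {e : GainEdge n} (h : e.1 ≠ e.2.1) : vec e ≠ 0 := by
  intro hc
  have h1 := congrArg (fun p : (Fin n → ℚ) × ℚ => p.1 e.2.1) hc
  simp only [vec, Pi.sub_apply, uv, eq_self_iff_true, if_true, if_neg (Ne.symm h),
    Prod.fst_zero, Pi.zero_apply] at h1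
  norm_num at h1

lemma Dset_empty (E : Finset (GainEdge n)) (hE : ∀ e ∈ E, e.1 < e.2.1) :
    Dset E (∅ : Finset (GainEdge n)) = ∅ := by
  rw [Finset.eq_empty_iff_forall_notMem]
  intro e hmem
  rw [Dset, Finset.mem_filter] at hmem
  obtain ⟨heE, hspan⟩ := hmem
  have h0 : Upper E (∅ : Finset (GainEdge n)) e = ∅ := Finset.filter_empty _
  rw [h0] at hspan
  simp only [Finset.coe_empty, Set.image_empty, Submodule.span_empty, Submodule.mem_bot] at hspan
  exact vec_ne_zero (ne_of_lt (hE e heE)) hspan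

lemma prod_get {M : Type*} [CommMonoid M] (L : List ℕ) (f : ℕ → M) :
    ∏ i : Fin L.length, f (L.get i) = (L.map f).prod := by
  conv_rhs => rw [← List.ofFn_get L, List.map_ofFn]
  rw [List.prod_ofFn]
  rfl

lemma prod_over_sort (S : Finset (GainEdge n)) (m : ℤ) :
    (∏ i : Fin (Multiset.sort ((Rset S).val.map (wv S)) (· ≥ ·)).length,
      ((m : ℤ) - (((Multiset.sort ((Rset S).val.map (wv S)) (· ≥ ·)).get i : ℕ) : ℤ))) =
    ∏ v ∈ Rset S, (m - ((wv S v : ℕ) : ℤ)) := by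
  rw [prod_get (Multiset.sort ((Rset S).val.map (wv S)) (· ≥ ·)) (fun w : ℕ => m - (w : ℤ))]
  rw [← Multiset.prod_coe, ← Multiset.map_coe, Multiset.sort_eq, Multiset.map_map]
  rw [Finset.prod_eq_multiset_prod]
  rfl

lemma mem_sort_iff (S : Finset (GainEdge n)) (a : ℕ) :
    a ∈ Multiset.sort ((Rset S).val.map (wv S)) (· ≥ ·) ↔ ∃ v ∈ Rset S, wv S v = a := by
  rw [Multiset.mem_sort, Multiset.mem_map]
  rfl

end PW

open PW in
/-- **Corollary 3.2** (piecewise polynomial structure).  For a nonempty integral gain graph `E`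
on `{1, …, n}` (`n ≥ 1`), there are `k ≥ 1` terms, with degrees `d j` (the first equal to `n`,
the others less than `n`), positive coefficients `μ j` (the first equal to `1`), and
nonincreasing sequences of nonnegative integer roots `r j 1 ≥ … ≥ r j (d j)` (all zero for the
first term), such that for every integer `m ≥ 0` the number of proper colorations with colors
in `{1, …, m}` equals the sum, over those `j` whose largest root is at most `m`, of
`(−1)^{n − d j} μ j ∏ i (m − r j i)`; in particular the first term is `m ^ n`. -/
theorem piecewise_polynomial_structure (n : ℕ) (hn : 1 ≤ n) (E : Finset (GainEdge n))
    (hE : ∀ e ∈ E, e.1 < e.2.1) (hEne : E.Nonempty) :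
    ∃ (k : ℕ) (hk : 0 < k) (d : Fin k → ℕ) (μ : Fin k → ℕ)
      (r : (j : Fin k) → Fin (d j) → ℕ),
        d ⟨0, hk⟩ = n ∧
        (∀ j, 0 < d j) ∧
        (∀ j, j ≠ ⟨0, hk⟩ → d j < n) ∧
        μ ⟨0, hk⟩ = 1 ∧
        (∀ j, 0 < μ j) ∧
        (∀ j, ∀ i i' : Fin (d j), i ≤ i' → r j i' ≤ r j i) ∧
        (∀ i, r ⟨0, hk⟩ i = 0) ∧
        (∀ m : ℤ, 0 ≤ m →
          (properCount E m : ℤ) =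
            ∑ j ∈ Finset.univ.filter (fun j : Fin k => ∀ i, (r j i : ℤ) ≤ m),
              (-1 : ℤ) ^ (n - d j) * (μ j : ℤ) * ∏ i, (m - (r j i : ℤ))) := by
  classical
  have hn0 : 0 < n := hn
  set K : Finset (Finset (GainEdge n)) :=
    E.powerset.filter (fun S => Dset E S = ∅ ∧ ∃ x, Sat S x) with hK
  have hemp : (∅ : Finset (GainEdge n)) ∈ K := by
    rw [hK, Finset.mem_filter, Finset.mem_powerset]
    exact ⟨Finset.empty_subset E, Dset_empty E hE,
      ⟨0, fun e he => absurd he (Finset.notMem_empty e)⟩⟩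
  have hk0 : 0 < K.card := Finset.card_pos.mpr ⟨∅, hemp⟩
  set l : List (Finset (GainEdge n)) := ∅ :: (K.erase ∅).toList with hl
  have hnodup : l.Nodup := by
    rw [hl]
    refine List.nodup_cons.mpr ⟨?_, Finset.nodup_toList _⟩
    intro hc
    rw [Finset.mem_toList, Finset.mem_erase] at hc
    exact hc.1 rfl
  have hlF : l.toFinset = K := by
    rw [hl, List.toFinset_cons, Finset.toList_toFinset]
    exact Finset.insert_erase hemp
  have hlen : l.length = K.card := by
    rw [hl]
    simp only [List.length_cons, Finset.length_toList]
    rw [Finset.card_erase_of_mem hemp]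
    omega
  refine ⟨K.card, hk0, ?_⟩
  set Sj : Fin K.card → Finset (GainEdge n) := fun j => l.get (Fin.cast hlen.symm j) with hSj
  have hSmem : ∀ j, Sj j ∈ K := by
    intro j
    rw [← hlF, List.mem_toFinset]
    exact List.get_mem l _
  have hSinj : Function.Injective Sj := by
    intro a b hab
    have h1 := (List.nodup_iff_injective_get.mp hnodup) hab
    have h2 := congrArg Fin.val h1
    rw [Fin.coe_cast, Fin.coe_cast] at h2
    exact Fin.ext h2
  have hS0 : Sj ⟨0, hk0⟩ = ∅ := rfl
  have hprops : ∀ j, Sj j ⊆ E ∧ Dset E (Sj j) = ∅ ∧ ∃ x, Sat (Sj j) x := by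
    intro j
    have hj := hSmem j
    rw [hK, Finset.mem_filter, Finset.mem_powerset] at hj
    exact ⟨hj.1, hj.2.1, hj.2.2⟩
  set d : Fin K.card → ℕ := fun j => (Rset (Sj j)).card with hd
  set wlist : Fin K.card → List ℕ :=
    fun j => Multiset.sort ((Rset (Sj j)).val.map (wv (Sj j))) (· ≥ ·) with hwlist
  have hwlen : ∀ j, (wlist j).length = d j := by
    intro j
    rw [hwlist, hd]
    rw [Multiset.length_sort, Multiset.card_map]
    rfl
  have hdcard : ∀ j, d j + (Sj j).card = n := by
    intro j
    exact Rset_card E hn0 (Sj j) (hprops j).1 (hprops j).2.1 (hprops j).2.2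
  refine ⟨d, fun _ => 1, fun j i => (wlist j).get (Fin.cast (hwlen j).symm i),
    ?_, ?_, ?_, rfl, fun _ => Nat.one_pos, ?_, ?_, ?_⟩
  · show (Rset (Sj ⟨0, hk0⟩)).card = n
    rw [hS0, Rset_empty, Finset.card_univ, Fintype.card_fin]
  · intro j
    exact Finset.card_pos.mpr ⟨rep (Sj j) ⟨0, hn0⟩, rep_mem_Rset _ _⟩
  · intro j hj
    have h1 := hdcard j
    have h2 : Sj j ≠ ∅ := by
      intro hc
      exact hj (hSinj (by rw [hc, hS0]))
    have h3 : 0 < (Sj j).card := Finset.card_pos.mpr (Finset.nonempty_iff_ne_empty.mpr h2)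
    omega
  · intro j i i' hii
    rcases eq_or_lt_of_le hii with heq | hlt
    · rw [heq]
    · have hs : List.Pairwise (· ≥ ·) (wlist j) := Multiset.pairwise_sort _ _
      have hltc : (Fin.cast (hwlen j).symm i) < (Fin.cast (hwlen j).symm i') := by
        rw [Fin.lt_def, Fin.coe_cast, Fin.coe_cast]
        exact hlt
      exact hs.rel_get_of_lt hltc
  · intro i
    change (wlist ⟨0, hk0⟩).get (Fin.cast (hwlen ⟨0, hk0⟩).symm i) = 0
    have hmem : (wlist ⟨0, hk0⟩).get (Fin.cast (hwlen ⟨0, hk0⟩).symm i) ∈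
        Multiset.sort ((Rset (Sj ⟨0, hk0⟩)).val.map (wv (Sj ⟨0, hk0⟩))) (· ≥ ·) :=
      List.get_mem _ _
    rw [mem_sort_iff] at hmem
    obtain ⟨v, hv, hwv⟩ := hmem
    have h5 : wv (Sj ⟨0, hk0⟩) v = 0 := wv_empty v
    exact hwv.symm.trans h5
  · intro m hm
    have hcondiff : ∀ j : Fin K.card,
        (∀ i : Fin (d j), (((wlist j).get (Fin.cast (hwlen j).symm i) : ℕ) : ℤ) ≤ m) ↔
          (∀ v ∈ Rset (Sj j), ((wv (Sj j) v : ℕ) : ℤ) ≤ m) := by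
      intro j
      constructor
      · intro h v hv
        have hmem : wv (Sj j) v ∈ wlist j := by
          show wv (Sj j) v ∈ Multiset.sort ((Rset (Sj j)).val.map (wv (Sj j))) (· ≥ ·)
          rw [mem_sort_iff]
          exact ⟨v, hv, rfl⟩
        obtain ⟨i0, hi0⟩ := List.mem_iff_get.mp hmem
        have := h (Fin.cast (hwlen j) i0)
        have hcast : (Fin.cast (hwlen j).symm (Fin.cast (hwlen j) i0)) = i0 := rfl
        rw [hcast, hi0] at this
        exact this
      · intro h i
        have hmem : (wlist j).get (Fin.cast (hwlen j).symm i) ∈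
            Multiset.sort ((Rset (Sj j)).val.map (wv (Sj j))) (· ≥ ·) := List.get_mem _ _
        rw [mem_sort_iff] at hmem
        obtain ⟨v, hv, hwv⟩ := hmem
        have h6 := h v hv
        rw [hwv] at h6
        exact h6
    calc (properCount E m : ℤ)
        = ∑ S ∈ E.powerset, (-1 : ℤ) ^ S.card * (N S m : ℤ) := properCount_eq E m
      _ = ∑ S ∈ E.powerset.filter (fun S => Dset E S = ∅), (-1 : ℤ) ^ S.card * (N S m : ℤ) :=
          step_cancel hn0 E m
      _ = ∑ S ∈ K, (-1 : ℤ) ^ S.card * (N S m : ℤ) := by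
          rw [← Finset.sum_filter_add_sum_filter_not
            (E.powerset.filter (fun S => Dset E S = ∅)) (fun S => ∃ x, Sat S x)]
          have hz : (∑ S ∈ (E.powerset.filter (fun S => Dset E S = ∅)).filter
              (fun S => ¬ ∃ x, Sat S x), (-1 : ℤ) ^ S.card * (N S m : ℤ)) = 0 := by
            refine Finset.sum_eq_zero ?_
            intro S hS
            rw [Finset.mem_filter] at hS
            have hzero : N S m = 0 := by
              rw [N, Finset.card_eq_zero, Finset.filter_eq_empty_iff]
              intro x _
              intro hsat
              exact hS.2 ⟨x, hsat⟩
            rw [hzero]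
            norm_num
          rw [hz, add_zero, Finset.filter_filter]
      _ = ∑ S ∈ K, (if (∀ v ∈ Rset S, ((wv S v : ℕ) : ℤ) ≤ m)
            then (-1 : ℤ) ^ S.card * ∏ v ∈ Rset S, (m - ((wv S v : ℕ) : ℤ)) else 0) := by
          refine Finset.sum_congr rfl ?_
          intro S hS
          rw [hK, Finset.mem_filter] at hS
          rw [N_cast S hS.2.2 m, mul_ite, mul_zero]
      _ = ∑ S ∈ K.filter (fun S => ∀ v ∈ Rset S, ((wv S v : ℕ) : ℤ) ≤ m),
            (-1 : ℤ) ^ S.card * ∏ v ∈ Rset S, (m - ((wv S v : ℕ) : ℤ)) :=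
          (Finset.sum_filter _ _).symm
      _ = ∑ j ∈ Finset.univ.filter
            (fun j : Fin K.card => ∀ i, (((wlist j).get (Fin.cast (hwlen j).symm i) : ℕ) : ℤ) ≤ m),
            (-1 : ℤ) ^ (n - d j) * ((1 : ℕ) : ℤ) *
              ∏ i, (m - (((wlist j).get (Fin.cast (hwlen j).symm i) : ℕ) : ℤ)) := by
          refine (Finset.sum_bij (fun (j : Fin K.card) _ => Sj j) ?_ ?_ ?_ ?_).symm
          · intro j hj
            rw [Finset.mem_filter] at hj
            rw [Finset.mem_filter]
            exact ⟨hSmem j, (hcondiff j).mp hj.2⟩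
          · intro a ha b hb hab
            exact hSinj hab
          · intro S hS
            rw [Finset.mem_filter] at hS
            have hSK : S ∈ l.toFinset := by rw [hlF]; exact hS.1
            rw [List.mem_toFinset] at hSK
            obtain ⟨i0, hi0⟩ := List.mem_iff_get.mp hSK
            refine ⟨Fin.cast hlen i0, ?_, ?_⟩
            · rw [Finset.mem_filter]
              refine ⟨Finset.mem_univ _, ?_⟩
              apply (hcondiff _).mpr
              have hSeq : Sj (Fin.cast hlen i0) = S := hi0
              rw [hSeq]
              exact hS.2
            · exact hi0
          · intro j hj
            have hcard : (Sj j).card = n - d j := by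
              have := hdcard j
              omega
            rw [hcard, Nat.cast_one, mul_one, ← prod_over_sort (Sj j) m]
            congr 1
            exact Fintype.prod_bijective (Fin.cast (hwlen j).symm)
              (finCongr (hwlen j).symm).bijective _ _ (fun i => rfl)
end

section
/- Theorem 3.3 (rooted integral expansion). Let (E, h) be a rooted integral gain graph on vertex set {1,…,n} and let m be any integer. Then the number of proper rooted m-colorations of (E, h) equals ∑_{B ∈ Lat^b(E)} μ(∅,B) · ∏_{W ∈ π(B)} (m − h_B(W))⁺. -/
open Finset
open scoped Classical

/-- The number of proper rooted `m`-colorations of the rooted integral gain graph `(E, h)`: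
maps `x` with `h v < x v ≤ m` for every vertex `v` that are proper for `E`. -/
noncomputable def rootedProperCount {n : ℕ} (E : Finset (GainEdge n)) (h : Fin n → ℤ)
    (m : ℤ) : ℕ :=
  Nat.card {x : Fin n → ℤ // (∀ v, h v < x v ∧ x v ≤ m) ∧ ProperFor E x}

section lemmas
variable {n : ℕ}

lemma potential_diff_const' {S : Finset (GainEdge n)} {θ₁ θ₂ : Fin n → ℤ}
    (h1 : IsPotential S θ₁) (h2 : IsPotential S θ₂) {u v : Fin n}
    (huv : Relation.EqvGen (fun a b => ∃ g : ℤ, (a, b, g) ∈ S) u v) :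
    θ₁ u - θ₂ u = θ₁ v - θ₂ v := by
  induction huv with
  | rel a b hab =>
      obtain ⟨g, hg⟩ := hab
      have e1 := h1 (a, b, g) hg
      have e2 := h2 (a, b, g) hg
      simp only at e1 e2
      omega
  | refl a => rfl
  | symm a b _ ih => omega
  | trans a b c _ _ ih1 ih2 => omega

lemma potential_diff_const {S : Finset (GainEdge n)} {θ₁ θ₂ : Fin n → ℤ}
    (h1 : IsPotential S θ₁) (h2 : IsPotential S θ₂) {u v : Fin n}
    (huv : SameComp S u v) : θ₁ u - θ₂ u = θ₁ v - θ₂ v :=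
  potential_diff_const' h1 h2 huv

lemma sameComp_refl (S : Finset (GainEdge n)) (v : Fin n) : SameComp S v v :=
  Relation.EqvGen.refl v

lemma sameComp_symm {S : Finset (GainEdge n)} {u v : Fin n} (h : SameComp S u v) :
    SameComp S v u := Relation.EqvGen.symm u v h

lemma sameComp_trans {S : Finset (GainEdge n)} {u v w : Fin n} (h : SameComp S u v)
    (h' : SameComp S v w) : SameComp S u w := Relation.EqvGen.trans u v w h h'

lemma sameComp_empty {u v : Fin n} (h : SameComp (∅ : Finset (GainEdge n)) u v) : u = v := by
  have h' : Relation.EqvGen (fun a b => ∃ g : ℤ, (a, b, g) ∈ (∅ : Finset (GainEdge n))) u v := h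
  clear h
  induction h' with
  | rel a b hab => obtain ⟨g, hg⟩ := hab; simp at hg
  | refl a => rfl
  | symm a b _ ih => exact ih.symm
  | trans a b c _ _ ih1 ih2 => exact ih1.trans ih2

lemma sup'_add_const {α : Type*} (s : Finset α) (hs : s.Nonempty) (f : α → ℤ) (c : ℤ) :
    s.sup' hs (fun v => f v + c) = s.sup' hs f + c := by
  apply le_antisymm
  · exact Finset.sup'_le _ _ fun v hv => add_le_add_left (Finset.le_sup' f hv) c
  · obtain ⟨v, hv, hv'⟩ := Finset.exists_mem_eq_sup' hs f
    rw [hv']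
    exact Finset.le_sup' (fun v => f v + c) hv

end lemmas

section more
variable {n : ℕ}

noncomputable def comp (S : Finset (GainEdge n)) (v : Fin n) : Finset (Fin n) :=
  Finset.univ.filter fun u => SameComp S u v

lemma mem_comp {S : Finset (GainEdge n)} {u v : Fin n} :
    u ∈ comp S v ↔ SameComp S u v := by simp [comp]

lemma self_mem_comp (S : Finset (GainEdge n)) (v : Fin n) : v ∈ comp S v :=
  mem_comp.2 (sameComp_refl S v)

lemma comp_eq_of_sameComp {S : Finset (GainEdge n)} {u v : Fin n} (h : SameComp S u v) :
    comp S u = comp S v := by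
  ext w
  simp only [mem_comp]
  exact ⟨fun hw => sameComp_trans hw h, fun hw => sameComp_trans hw (sameComp_symm h)⟩

lemma comp_mem_blocks (S : Finset (GainEdge n)) (v : Fin n) : comp S v ∈ blocks S :=
  Finset.mem_image_of_mem _ (Finset.mem_univ v)

lemma blocks_eq {S : Finset (GainEdge n)} {W : Finset (Fin n)} (hW : W ∈ blocks S) :
    ∃ v : Fin n, W = comp S v := by
  simp only [blocks, Finset.mem_image] at hW
  obtain ⟨v, _, hv⟩ := hW
  exact ⟨v, hv.symm⟩

noncomputable def Sset (E : Finset (GainEdge n)) (x : Fin n → ℤ) : Finset (GainEdge n) :=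
  E.filter fun e => x e.2.1 = x e.1 + e.2.2

lemma isPotential_Sset (E : Finset (GainEdge n)) (x : Fin n → ℤ) :
    IsPotential (Sset E x) x := by
  intro e he
  rw [Sset, Finset.mem_filter] at he
  omega


lemma Sset_mem_Latb (E : Finset (GainEdge n)) (x : Fin n → ℤ) : Sset E x ∈ Latb E := by
  rw [Latb, Finset.mem_filter, Finset.mem_powerset]
  refine ⟨Finset.filter_subset _ _, ⟨x, isPotential_Sset E x⟩, ?_⟩
  rintro e he hcomp ⟨θ, hθ⟩
  rw [Finset.mem_sdiff] at he
  have hθ' : IsPotential (Sset E x) θ := fun f hf => hθ f (Finset.mem_insert_of_mem hf)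
  have hc := potential_diff_const (isPotential_Sset E x) hθ' hcomp
  have hedge := hθ e (Finset.mem_insert_self e _)
  have : e ∈ Sset E x := by
    rw [Sset, Finset.mem_filter]
    exact ⟨he.1, by omega⟩
  exact he.2 this

lemma empty_mem_Latb (E : Finset (GainEdge n)) (hE : ∀ e ∈ E, e.1 < e.2.1) :
    (∅ : Finset (GainEdge n)) ∈ Latb E := by
  rw [Latb, Finset.mem_filter, Finset.mem_powerset]
  refine ⟨Finset.empty_subset _, ⟨0, fun e he => absurd he (Finset.notMem_empty e)⟩, ?_⟩
  intro e he hcomp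
  have := sameComp_empty hcomp
  rw [Finset.mem_sdiff] at he
  exact absurd (this ▸ hE e he.1) (lt_irrefl _)
end more

section count
variable {n : ℕ}

lemma count_sat (h : Fin n → ℤ) (m : ℤ) (B : Finset (GainEdge n))
    (θ : Fin n → ℤ) (hθ : IsPotential B θ) (F : Finset (Fin n) → ℤ)
    (hF : ∀ W ∈ blocks B, ∀ hW : W.Nonempty,
        F W = W.sup' hW (fun v => h v + W.sup' hW θ - θ v)) :
    ((Fintype.piFinset fun v => Finset.Ioc (h v) m).filter
        (fun x => ∀ e ∈ B, x e.2.1 = x e.1 + e.2.2)).card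
      = ∏ W ∈ blocks B, (m - F W).toNat := by
  classical
  letI s : Setoid (Fin n) := Relation.EqvGen.setoid (fun a b => ∃ g : ℤ, (a, b, g) ∈ B)
  haveI : Fintype (Quotient s) := Fintype.ofFinite _
  have hr : ∀ u v : Fin n, (Quotient.mk s u = Quotient.mk s v) ↔ SameComp B u v := by
    intro u v
    exact ⟨fun hq => Quotient.exact hq, fun hq => Quotient.sound hq⟩
  set P : Quotient s → ℤ → Prop :=
    fun q t => ∀ v : Fin n, Quotient.mk s v = q → (h v - θ v < t ∧ t ≤ m - θ v) with hP
  -- step 2 : equiv with functions on the quotient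
  have e2 : {x : Fin n → ℤ //
          (∀ v, x v ∈ Finset.Ioc (h v) m) ∧ ∀ e ∈ B, x e.2.1 = x e.1 + e.2.2}
      ≃ {y : Quotient s → ℤ // ∀ q, P q (y q)} := by
    have hfwd : ∀ x : Fin n → ℤ, (∀ v, x v ∈ Finset.Ioc (h v) m) →
        (∀ e ∈ B, x e.2.1 = x e.1 + e.2.2) →
        ∀ q : Quotient s, P q (x q.out - θ q.out) := by
      intro x hbox hsat q
      rw [hP]
      intro v hv
      have hpotx : IsPotential B x := by
        intro e he
        have := hsat e he
        omega
      have hsc : SameComp B v q.out := by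
        rw [← hr, hv, Quotient.out_eq]
      have hconst := potential_diff_const hpotx hθ hsc
      have hb := hbox v
      rw [Finset.mem_Ioc] at hb
      omega
    have hbwd1 : ∀ y : Quotient s → ℤ, (∀ q, P q (y q)) →
        ∀ v, θ v + y (Quotient.mk s v) ∈ Finset.Ioc (h v) m := by
      intro y hy v
      have := hy (Quotient.mk s v)
      rw [hP] at this
      have h2 := this v rfl
      rw [Finset.mem_Ioc]
      omega
    have hbwd2 : ∀ y : Quotient s → ℤ, (∀ q, P q (y q)) →
        ∀ e ∈ B, θ e.2.1 + y (Quotient.mk s e.2.1) = θ e.1 + y (Quotient.mk s e.1) + e.2.2 := by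
      intro y hy e he
      have hq : Quotient.mk s e.1 = Quotient.mk s e.2.1 :=
        (hr _ _).2 (Relation.EqvGen.rel _ _ ⟨e.2.2, he⟩)
      have hpe := hθ e he
      rw [← hq]
      omega
    have hlinv : ∀ x : Fin n → ℤ, (∀ e ∈ B, x e.2.1 = x e.1 + e.2.2) →
        ∀ v, θ v + (x (Quotient.mk s v).out - θ (Quotient.mk s v).out) = x v := by
      intro x hsat v
      have hpotx : IsPotential B x := by
        intro e he
        have := hsat e he
        omega
      have hsc : SameComp B (Quotient.mk s v).out v := Quotient.mk_out v
      have hconst := potential_diff_const hpotx hθ hsc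
      omega
    refine ⟨fun x => ⟨fun q => x.1 q.out - θ q.out, hfwd x.1 x.2.1 x.2.2⟩,
      fun y => ⟨fun v => θ v + y.1 (Quotient.mk s v), hbwd1 y.1 y.2, hbwd2 y.1 y.2⟩, ?_, ?_⟩
    · intro x
      apply Subtype.ext
      funext v
      exact hlinv x.1 x.2.2 v
    · intro y
      apply Subtype.ext
      funext q
      simp only [Quotient.out_eq]
      omega
  -- step 3 : per-class cardinalities
  have step3 : ∀ q : Quotient s, Nat.card {t : ℤ // P q t} = (m - F (comp B q.out)).toNat := by
    intro q
    set W := comp B q.out with hWdef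
    have hW : W.Nonempty := ⟨q.out, self_mem_comp B q.out⟩
    have hmemW : ∀ v, v ∈ W ↔ Quotient.mk s v = q := by
      intro v
      rw [hWdef, mem_comp, ← hr, Quotient.out_eq]
    set lo := W.sup' hW (fun v => h v - θ v) with hlo
    set hi := m - W.sup' hW θ with hhi
    have hPiff : ∀ t, P q t ↔ t ∈ Finset.Ioc lo hi := by
      intro t
      rw [Finset.mem_Ioc]
      constructor
      · intro hp
        constructor
        · obtain ⟨v0, hv0, hv0e⟩ := Finset.exists_mem_eq_sup' hW (fun v => h v - θ v)
          rw [hlo, hv0e]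
          exact (hp v0 ((hmemW v0).1 hv0)).1
        · obtain ⟨v1, hv1, hv1e⟩ := Finset.exists_mem_eq_sup' hW θ
          have := (hp v1 ((hmemW v1).1 hv1)).2
          rw [hhi, hv1e]
          exact this
      · rintro ⟨h1, h2⟩ v hv
        have hvW : v ∈ W := (hmemW v).2 hv
        have l1 : h v - θ v ≤ lo := by
          rw [hlo]
          exact Finset.le_sup' (fun v => h v - θ v) hvW
        have l2 : θ v ≤ W.sup' hW θ := Finset.le_sup' θ hvW
        omega
    have hcard : Nat.card {t : ℤ // P q t} = (hi - lo).toNat := by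
      rw [Nat.card_congr (Equiv.subtypeEquivRight hPiff), Nat.card_eq_finsetCard,
        Int.card_Ioc]
    have hFval : F W = lo + W.sup' hW θ := by
      rw [hF W (hWdef ▸ comp_mem_blocks B q.out) hW, hlo, ← sup'_add_const W hW _ (W.sup' hW θ)]
      apply Finset.sup'_congr hW rfl
      intro v _
      ring
    rw [hcard]
    congr 1
    rw [hFval, hhi]
    ring
  -- step 4 : assemble
  -- step 1 : to Nat.card of subtype
  have step1 : ((Fintype.piFinset fun v => Finset.Ioc (h v) m).filter
        (fun x => ∀ e ∈ B, x e.2.1 = x e.1 + e.2.2)).card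
      = Nat.card {x : Fin n → ℤ //
          (∀ v, x v ∈ Finset.Ioc (h v) m) ∧ ∀ e ∈ B, x e.2.1 = x e.1 + e.2.2} := by
    rw [← Nat.card_eq_finsetCard]
    refine Nat.card_congr (Equiv.subtypeEquivRight ?_)
    intro x
    simp [Finset.mem_filter, Fintype.mem_piFinset]
  rw [step1, Nat.card_congr e2, Nat.card_congr (Equiv.subtypePiEquivPi), Nat.card_pi]
  have : ∀ q : Quotient s, Nat.card {t : ℤ // P q t} = (m - F (comp B q.out)).toNat := step3
  rw [Finset.prod_congr rfl fun q _ => this q]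
  refine Finset.prod_bij (fun q _ => comp B q.out) ?_ ?_ ?_ ?_
  · intro q _
    exact comp_mem_blocks B q.out
  · intro q1 _ q2 _ h12
    have h12' : comp B q1.out = comp B q2.out := h12
    have hmem : q1.out ∈ comp B q2.out := h12' ▸ self_mem_comp B q1.out
    have hsc : SameComp B q1.out q2.out := mem_comp.1 hmem
    calc q1 = Quotient.mk s q1.out := (Quotient.out_eq q1).symm
      _ = Quotient.mk s q2.out := (hr _ _).2 hsc
      _ = q2 := Quotient.out_eq q2
  · intro W hWb
    obtain ⟨v, rfl⟩ := blocks_eq hWb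
    refine ⟨Quotient.mk s v, Finset.mem_univ _, ?_⟩
    exact comp_eq_of_sameComp (Quotient.mk_out v)
  · intro q _
    rfl

end count

/-- **Theorem 3.3** (rooted integral expansion).  For a rooted integral gain graph `(E, h)` on
`{1, …, n}` and any integer `m`, the number of proper rooted `m`-colorations equals
`∑_{B ∈ Lat^b(E)} μ(∅, B) ∏_{W ∈ π(B)} (m − h_B(W))⁺`.  Here `mu` is the Möbius function of
`Lat^b(E)` (characterized by `hmu`) and `ht B W` is the rooted height
`h_B(W) = max_{v ∈ W} (h v + max_{u ∈ W} θ u − θ v)` for any potential `θ` of `B`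
(characterized by `hht`). -/
theorem rooted_integral_expansion (n : ℕ) (E : Finset (GainEdge n))
    (hE : ∀ e ∈ E, e.1 < e.2.1)
    (h : Fin n → ℤ) (m : ℤ)
    (mu : Finset (GainEdge n) → ℤ)
    (hmu : ∀ B ∈ Latb E,
      ∑ A ∈ (Latb E).filter (· ⊆ B), mu A = if B = ∅ then 1 else 0)
    (ht : Finset (GainEdge n) → Finset (Fin n) → ℤ)
    (hht : ∀ B ∈ Latb E, ∀ θ : Fin n → ℤ, IsPotential B θ →
      ∀ W ∈ blocks B, ∀ hW : W.Nonempty,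
        ht B W = W.sup' hW (fun v => h v + W.sup' hW θ - θ v)) :
    (rootedProperCount E h m : ℤ) =
      ∑ B ∈ Latb E, mu B * ∏ W ∈ blocks B, max (m - ht B W) 0 := by
  have hstate : rootedProperCount E h m = Nat.card {x : Fin n → ℤ // (∀ v, h v < x v ∧ x v ≤ m) ∧ ∀ e ∈ E, x e.2.1 ≠ x e.1 + e.2.2} := rfl
  rw [hstate]
  classical
  set X := Fintype.piFinset fun v => Finset.Ioc (h v) m with hX
  set f : Finset (GainEdge n) → ℕ := fun B => (X.filter fun x => Sset E x = B).card with hf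
  -- LHS equals f ∅
  have hproper : Nat.card {x : Fin n → ℤ // (∀ v, h v < x v ∧ x v ≤ m) ∧
      ∀ e ∈ E, x e.2.1 ≠ x e.1 + e.2.2} = f ∅ := by
    rw [hf]
    simp only
    rw [← Nat.card_eq_finsetCard]
    refine Nat.card_congr (Equiv.subtypeEquivRight ?_)
    intro x
    rw [Finset.mem_filter, hX, Fintype.mem_piFinset]
    constructor
    · rintro ⟨hbox, hprop⟩
      refine ⟨fun v => Finset.mem_Ioc.2 (hbox v), ?_⟩
      rw [Sset, Finset.filter_eq_empty_iff]
      exact hprop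
    · rintro ⟨hbox, hemp⟩
      rw [Sset, Finset.filter_eq_empty_iff] at hemp
      exact ⟨fun v => Finset.mem_Ioc.1 (hbox v), hemp⟩
  -- key counting identity
  have key : ∀ A ∈ Latb E, (∑ B ∈ (Latb E).filter (A ⊆ ·), (f B : ℤ))
      = ∏ W ∈ blocks A, max (m - ht A W) 0 := by
    intro A hA
    have hA' := hA
    rw [Latb, Finset.mem_filter, Finset.mem_powerset] at hA'
    obtain ⟨hsub, ⟨θ, hθ⟩, _⟩ := hA'
    have hfib : (X.filter fun x => ∀ e ∈ A, x e.2.1 = x e.1 + e.2.2).card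
        = ∑ B ∈ (Latb E).filter (A ⊆ ·), f B := by
      have h1 : (X.filter fun x => ∀ e ∈ A, x e.2.1 = x e.1 + e.2.2)
          = X.filter fun x => A ⊆ Sset E x := by
        apply Finset.filter_congr
        intro x _
        constructor
        · intro hall e he
          rw [Sset, Finset.mem_filter]
          exact ⟨hsub he, hall e he⟩
        · intro hss e he
          have := hss he
          rw [Sset, Finset.mem_filter] at this
          exact this.2
      rw [h1]
      rw [Finset.card_eq_sum_card_fiberwise (f := fun x => Sset E x)
        (t := (Latb E).filter (A ⊆ ·)) ?_]
      · apply Finset.sum_congr rfl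
        intro B hB
        rw [Finset.mem_filter] at hB
        rw [hf]
        simp only
        congr 1
        rw [Finset.filter_filter]
        apply Finset.filter_congr
        intro x _
        constructor
        · exact And.right
        · intro hx
          exact ⟨hx ▸ hB.2, hx⟩
      · intro x hx
        rw [Finset.mem_coe, Finset.mem_filter] at hx
        rw [Finset.mem_coe, Finset.mem_filter]
        exact ⟨Sset_mem_Latb E x, hx.2⟩
    have hcount := count_sat h m A θ hθ (ht A) (fun W hW hWne => hht A hA θ hθ W hW hWne)
    rw [← Nat.cast_sum, ← hfib, hX] at *
    rw [hcount, Nat.cast_prod]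
    apply Finset.prod_congr rfl
    intro W _
    rw [Int.toNat_eq_max]
  -- Möbius inversion
  rw [hproper]
  symm
  calc ∑ B ∈ Latb E, mu B * ∏ W ∈ blocks B, max (m - ht B W) 0
      = ∑ B ∈ Latb E, ∑ A ∈ (Latb E).filter (B ⊆ ·), mu B * (f A : ℤ) := by
        apply Finset.sum_congr rfl
        intro B hB
        rw [← key B hB, Finset.mul_sum]
    _ = ∑ B ∈ Latb E, ∑ A ∈ Latb E, if B ⊆ A then mu B * (f A : ℤ) else 0 := by
        apply Finset.sum_congr rfl
        intro B _
        rw [Finset.sum_filter]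
    _ = ∑ A ∈ Latb E, ∑ B ∈ Latb E, if B ⊆ A then mu B * (f A : ℤ) else 0 :=
        Finset.sum_comm
    _ = ∑ A ∈ Latb E, (∑ B ∈ (Latb E).filter (· ⊆ A), mu B) * (f A : ℤ) := by
        apply Finset.sum_congr rfl
        intro A _
        rw [Finset.sum_mul, Finset.sum_filter]
    _ = ∑ A ∈ Latb E, (if A = ∅ then (1 : ℤ) else 0) * (f A : ℤ) := by
        apply Finset.sum_congr rfl
        intro A hAA
        rw [hmu A hAA]
    _ = (f ∅ : ℤ) := by
        rw [Finset.sum_eq_single_of_mem ∅ (empty_mem_Latb E hE)]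
        · rw [if_pos rfl, one_mul]
        · intro A _ hAne
          rw [if_neg hAne, zero_mul]
end

section
/- Theorem 3.4 (deletion–contraction for rooted integral gain graphs). Let n ≥ 1, let E be a finite set of triples (u,v,g') with u,v ∈ {1,…,n} and g' ∈ ℤ (arbitrary orientations and loops allowed), let h : {1,…,n} → ℤ, and for an integer m let χ(E,h,m) be the number of maps x : {1,…,n} → ℤ with h_v < x_v ≤ m for all v and x_v ≠ x_u + g' for all (u,v,g') ∈ E. Let e = (i,j,g) ∈ E with i ≠ j and g ≥ 0. Define η : {1,…,n} → ℤ by η_i = g and η_v = 0 for v ≠ i; define q : {1,…,n} → {1,…,n}∖{i} by q(i) = j and q(v) = v otherwise; let E/e := { (q(u), q(v), g' + η_v − η_u) : (u,v,g') ∈ E ∖ {e} }, a finite set of triples on the vertex set V' := {1,…,n}∖{i}; and let h' : V' → ℤ be given by h'_j = max(h_j, h_i + g) and h'_v = h_v for v ≠ j. Then for every integer m: χ(E,h,m) = χ(E∖{e}, h, m) − χ(E/e, h', m), where χ(E/e, h', m) is the analogous count of maps x : V' → ℤ. (The case g < 0 reduces to this one by replacing the triple (i,j,g) with the equivalent triple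 (j,i,−g).) -/
open Finset
open scoped Classical

/-- The number of proper rooted `m`-colorations of the rooted integral gain graph `(E, h)` on a
finite vertex set `V`: maps `x : V → ℤ` with `h v < x v ≤ m` for every vertex `v`, such that
`x v ≠ x u + g` for every edge `(u, v, g) ∈ E`. -/
noncomputable def rootedChi {V : Type*} [Fintype V] (E : Finset (V × V × ℤ)) (h : V → ℤ)
    (m : ℤ) : ℕ :=
  Nat.card {x : V → ℤ // (∀ v, h v < x v ∧ x v ≤ m) ∧ ∀ e ∈ E, x e.2.1 ≠ x e.1 + e.2.2}

/-- The switching function `η` used in contracting the edge `(i, j, g)`: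
`η i = g` and `η v = 0` for `v ≠ i`. -/
def contrEta {n : ℕ} (i : Fin n) (g : ℤ) (v : Fin n) : ℤ :=
  if v = i then g else 0

/-- The vertex contraction map `q : {1, …, n} → {1, …, n} ∖ {i}` sending `i` to `j` and fixing
every other vertex. -/
def contrMap {n : ℕ} (i j : Fin n) (hij : i ≠ j) (v : Fin n) : {v : Fin n // v ≠ i} :=
  if hv : v = i then ⟨j, Ne.symm hij⟩ else ⟨v, hv⟩

lemma chi_finite {V : Type*} [Fintype V] (P : (V → ℤ) → Prop) (h : V → ℤ) (m : ℤ) :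
    Finite {x : V → ℤ // (∀ v, h v < x v ∧ x v ≤ m) ∧ P x} := by
  haveI : ∀ v : V, Finite (Set.Ioc (h v) m) := fun v => (Set.finite_Ioc _ _).to_subtype
  apply Finite.of_injective
    (fun x => (fun v => (⟨x.1 v, (x.2.1 v).1, (x.2.1 v).2⟩ : Set.Ioc (h v) m)))
  intro a b hab
  apply Subtype.ext; funext v
  exact congrArg Subtype.val (congrFun hab v)

/-- **Theorem 3.4** (deletion–contraction for rooted integral gain graphs).
For a rooted integral gain graph `(E, h)` on `{1, …, n}` and a nonloop edge `e = (i, j, g) ∈ E`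
with `g ≥ 0`, the number of proper rooted `m`-colorations satisfies
`χ(E, h, m) = χ(E ∖ {e}, h, m) − χ(E/e, h', m)`, where `E/e` lives on the vertex set
`{1, …, n} ∖ {i}`, its edges are `(q u, q v, g' + η v − η u)` for `(u, v, g') ∈ E ∖ {e}`, and
`h' j = max (h j) (h i + g)` while `h' v = h v` for `v ≠ j`. -/
theorem rooted_deletion_contraction (n : ℕ) (hn : 1 ≤ n)
    (E : Finset (Fin n × Fin n × ℤ)) (h : Fin n → ℤ)
    (i j : Fin n) (g : ℤ) (hij : i ≠ j) (hg : 0 ≤ g) (he : (i, j, g) ∈ E) (m : ℤ) :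
    (rootedChi E h m : ℤ) =
      (rootedChi (E.erase (i, j, g)) h m : ℤ) -
      (rootedChi
        ((E.erase (i, j, g)).image fun e =>
          (contrMap i j hij e.1, contrMap i j hij e.2.1,
            e.2.2 + contrEta i g e.2.1 - contrEta i g e.1))
        (fun v : {v : Fin n // v ≠ i} =>
          if (v : Fin n) = j then max (h j) (h i + g) else h (v : Fin n))
        m : ℤ) := by
  classical
  set E' := E.erase (i, j, g) with hE'
  set Ec := (E'.image fun e =>
      (contrMap i j hij e.1, contrMap i j hij e.2.1,
        e.2.2 + contrEta i g e.2.1 - contrEta i g e.1)) with hEc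
  set h' : {v : Fin n // v ≠ i} → ℤ :=
    fun v => if (v : Fin n) = j then max (h j) (h i + g) else h (v : Fin n) with hh'
  -- types
  let TD := {x : Fin n → ℤ // (∀ v, h v < x v ∧ x v ≤ m) ∧ ∀ e ∈ E', x e.2.1 ≠ x e.1 + e.2.2}
  let TE := {x : Fin n → ℤ // (∀ v, h v < x v ∧ x v ≤ m) ∧ ∀ e ∈ E, x e.2.1 ≠ x e.1 + e.2.2}
  let TC := {x : {v : Fin n // v ≠ i} → ℤ //
      (∀ v, h' v < x v ∧ x v ≤ m) ∧ ∀ e ∈ Ec, x e.2.1 ≠ x e.1 + e.2.2}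
  haveI : Finite TD := chi_finite _ h m
  haveI : Finite TE := chi_finite _ h m
  haveI : Finite TC := chi_finite _ h' m
  set p : TD → Prop := fun x => x.1 j = x.1 i + g with hp
  have hcmi : contrMap i j hij i = ⟨j, Ne.symm hij⟩ := dif_pos rfl
  have hcmv : ∀ v (hv : v ≠ i), contrMap i j hij v = ⟨v, hv⟩ := fun v hv => dif_neg hv
  -- equivalence with deletion for non-p
  have e1 : {x : TD // ¬ p x} ≃ TE :=
    { toFun := fun x => ⟨x.1.1, x.1.2.1, by
        intro e' he'
        rcases eq_or_ne e' (i, j, g) with rfl | hne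
        · exact x.2
        · exact x.1.2.2 e' (Finset.mem_erase.mpr ⟨hne, he'⟩)⟩
      invFun := fun x => ⟨⟨x.1, x.2.1, fun e' he' => x.2.2 e' (Finset.mem_erase.mp he').2⟩,
        x.2.2 (i, j, g) he⟩
      left_inv := fun x => by apply Subtype.ext; apply Subtype.ext; rfl
      right_inv := fun x => by apply Subtype.ext; rfl }
  -- equivalence with contraction for p
  have e2 : {x : TD // p x} ≃ TC :=
    { toFun := fun x => ⟨fun v => x.1.1 (v : Fin n), by
        constructor
        · intro v
          by_cases hvj : (v : Fin n) = j
          · have h1 := x.1.2.1 j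
            have h2 := x.1.2.1 i
            have h3 : x.1.1 j = x.1.1 i + g := x.2
            simp only [hh', hvj, if_pos]
            constructor
            · exact max_lt h1.1 (by omega)
            · exact h1.2
          · simp only [hh', hvj, if_neg, not_false_iff]
            exact x.1.2.1 (v : Fin n)
        · intro f hf
          obtain ⟨e', he', rfl⟩ := Finset.mem_image.mp hf
          have hq : ∀ u : Fin n,
              x.1.1 ((contrMap i j hij u : {v : Fin n // v ≠ i}) : Fin n)
                = x.1.1 u + contrEta i g u := by
            intro u
            by_cases hu : u = i
            · subst hu
              rw [hcmi]
              simp only [contrEta, if_pos rfl]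
              exact x.2
            · rw [hcmv u hu]
              simp [contrEta, hu]
          dsimp only
          rw [hq, hq]
          have := x.1.2.2 e' he'
          intro hC; exact this (by omega)⟩
      invFun := fun y => by
        refine ⟨⟨fun v => if hv : v = i then y.1 ⟨j, Ne.symm hij⟩ - g else y.1 ⟨v, hv⟩, ?_, ?_⟩, ?_⟩
        · intro v
          have hyj := y.2.1 ⟨j, Ne.symm hij⟩
          simp only [hh', if_pos] at hyj
          dsimp only
          by_cases hv : v = i
          · rw [dif_pos hv, hv]
            have := le_max_right (h j) (h i + g)
            constructor <;> omega
          · rw [dif_neg hv]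
            have hyv := y.2.1 ⟨v, hv⟩
            by_cases hvj : v = j
            · simp only [hh', hvj, if_pos] at hyv
              have := le_max_left (h j) (h i + g)
              subst hvj
              constructor <;> omega
            · simpa only [hh', hvj, if_neg, not_false_iff] using hyv
        · intro e' he'
          have hmem : (contrMap i j hij e'.1, contrMap i j hij e'.2.1,
              e'.2.2 + contrEta i g e'.2.1 - contrEta i g e'.1) ∈ Ec :=
            Finset.mem_image.mpr ⟨e', he', rfl⟩
          have hy := y.2.2 _ hmem
          have hq2 : ∀ v : Fin n,
              (if hv : v = i then y.1 ⟨j, Ne.symm hij⟩ - g else y.1 ⟨v, hv⟩)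
                = y.1 (contrMap i j hij v) - contrEta i g v := by
            intro v
            by_cases hv : v = i
            · subst hv; rw [dif_pos rfl, hcmi]; simp [contrEta]
            · rw [dif_neg hv, hcmv v hv]; simp [contrEta, hv]
          dsimp only
          rw [hq2, hq2]
          simp only at hy
          intro hC; exact hy (by omega)
        · simp only [hp]
          rw [dif_neg (Ne.symm hij), dif_pos trivial]
          omega
      left_inv := fun x => by
        apply Subtype.ext; apply Subtype.ext; funext v
        dsimp only
        by_cases hv : v = i
        · rw [dif_pos hv, hv]
          have : x.1.1 j = x.1.1 i + g := x.2
          omega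
        · rw [dif_neg hv]
      right_inv := fun y => by
        apply Subtype.ext; funext v
        dsimp only
        rw [dif_neg v.2] }
  have key : rootedChi E' h m = rootedChi E h m + rootedChi Ec h' m := by
    have : Nat.card TD = Nat.card {x : TD // p x} + Nat.card {x : TD // ¬ p x} := by
      rw [← Nat.card_sum]
      exact (Nat.card_congr (Equiv.sumCompl p)).symm
    have h1 : Nat.card {x : TD // ¬ p x} = Nat.card TE := Nat.card_congr e1
    have h2 : Nat.card {x : TD // p x} = Nat.card TC := Nat.card_congr e2
    show Nat.card TD = Nat.card TE + Nat.card TC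
    omega
  rw [key]
  push_cast
  ring
end

section
/- Corollary 5.1 (interval graph coloring). Let G be a simple graph on a finite vertex set V, let h : V → ℤ, and let m be an integer. Then χ_{G,h}(m) = ∑_{π ∈ Π(G)} μ(0̂, π) · ∏_{W ∈ π} (m − h(W))⁺, where h(W) := max{ h_v : v ∈ W }. -/
open Finset
open scoped Classical

/-- The number of proper colorations of the graph `G` in which vertex `v` receives a color
from the interval `(h v, m]`. -/
noncomputable def intervalChromatic {V : Type*} [Fintype V] (G : SimpleGraph V) (h : V → ℤ)
    (m : ℤ) : ℕ :=
  Nat.card {x : V → ℤ // (∀ v, h v < x v ∧ x v ≤ m) ∧ ∀ u v, G.Adj u v → x u ≠ x v}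

/-- `P` is a partition of the vertex set of `G` each of whose blocks induces a connected
subgraph of `G`.  (Partitions are represented as the finite set of their blocks.) -/
def IsConnPartition {V : Type*} [Fintype V] (G : SimpleGraph V) (P : Finset (Finset V)) : Prop :=
  (∀ W ∈ P, W.Nonempty) ∧ (∀ v : V, ∃! W, W ∈ P ∧ v ∈ W) ∧
    ∀ W ∈ P, (G.induce (W : Set V)).Connected

/-- The poset `Π(G)` of partitions of `V` whose blocks induce connected subgraphs of `G`. -/
noncomputable def connPartitions {V : Type*} [Fintype V] [DecidableEq V] (G : SimpleGraph V) :
    Finset (Finset (Finset V)) :=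
  Finset.univ.filter fun P => IsConnPartition G P

section Aux
variable {V : Type*} [Fintype V] [DecidableEq V]

/-- The graph on `V` with an edge between `u` and `v` iff `G.Adj u v` and `x u = x v`. -/
def eqGraph (G : SimpleGraph V) (x : V → ℤ) : SimpleGraph V where
  Adj u v := G.Adj u v ∧ x u = x v
  symm := ⟨fun u v h => ⟨h.1.symm, h.2.symm⟩⟩
  loopless := ⟨fun v h => G.loopless.irrefl v h.1⟩

/-- The connected component of `v` in `eqGraph G x`, as a `Finset`. -/
noncomputable def blk (G : SimpleGraph V) (x : V → ℤ) (v : V) : Finset V :=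
  Finset.univ.filter fun w => (eqGraph G x).Reachable v w

/-- The partition of `V` into connected components of `eqGraph G x`. -/
noncomputable def sig (G : SimpleGraph V) (x : V → ℤ) : Finset (Finset V) :=
  Finset.univ.image (blk G x)

lemma mem_blk {G : SimpleGraph V} {x : V → ℤ} {v w : V} :
    w ∈ blk G x v ↔ (eqGraph G x).Reachable v w := by simp [blk]

lemma blk_self {G : SimpleGraph V} {x : V → ℤ} (v : V) : v ∈ blk G x v :=
  mem_blk.2 (SimpleGraph.Reachable.refl v)

lemma blk_eq_of_reachable {G : SimpleGraph V} {x : V → ℤ} {v w : V}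
    (hvw : (eqGraph G x).Reachable v w) : blk G x v = blk G x w := by
  ext u; simp only [mem_blk]
  exact ⟨fun hu => hvw.symm.trans hu, fun hu => hvw.trans hu⟩

lemma walk_const {G : SimpleGraph V} {x : V → ℤ} {a b : V}
    (p : (eqGraph G x).Walk a b) : x a = x b := by
  induction p with
  | nil => rfl
  | cons h _ ih => exact h.2.trans ih

lemma reachable_const {G : SimpleGraph V} {x : V → ℤ} {a b : V}
    (hr : (eqGraph G x).Reachable a b) : x a = x b :=
  hr.elim fun p => walk_const p

lemma walk_in_blk {G : SimpleGraph V} {x : V → ℤ} (v : V) :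
    ∀ {a b : V}, (eqGraph G x).Walk a b → ∀ (ha : a ∈ blk G x v) (hb : b ∈ blk G x v),
    (G.induce ((blk G x v : Finset V) : Set V)).Reachable
      ⟨a, Finset.mem_coe.2 ha⟩ ⟨b, Finset.mem_coe.2 hb⟩ := by
  intro a b p
  induction p with
  | nil => intro ha hb; exact SimpleGraph.Reachable.refl _
  | @cons a c b hadj p ih =>
    intro ha hb
    have hc : c ∈ blk G x v := mem_blk.2 ((mem_blk.1 ha).trans hadj.reachable)
    have step : (G.induce ((blk G x v : Finset V) : Set V)).Adj
        ⟨a, Finset.mem_coe.2 ha⟩ ⟨c, Finset.mem_coe.2 hc⟩ := by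
      simp only [SimpleGraph.comap_adj, Function.Embedding.coe_subtype]
      exact hadj.1
    exact step.reachable.trans (ih hc hb)

lemma sig_isConnPartition (G : SimpleGraph V) (x : V → ℤ) :
    IsConnPartition G (sig G x) := by
  refine ⟨?_, ?_, ?_⟩
  · intro W hW
    obtain ⟨v, -, rfl⟩ := Finset.mem_image.1 hW
    exact ⟨v, blk_self v⟩
  · intro v
    refine ⟨blk G x v, ⟨Finset.mem_image.2 ⟨v, Finset.mem_univ v, rfl⟩, blk_self v⟩, ?_⟩
    rintro W ⟨hW, hv⟩
    obtain ⟨u, -, rfl⟩ := Finset.mem_image.1 hW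
    exact blk_eq_of_reachable (mem_blk.1 hv)
  · intro W hW
    obtain ⟨v, -, rfl⟩ := Finset.mem_image.1 hW
    rw [SimpleGraph.connected_iff]
    constructor
    · rintro ⟨a, ha⟩ ⟨b, hb⟩
      have ha' : a ∈ blk G x v := Finset.mem_coe.1 ha
      have hb' : b ∈ blk G x v := Finset.mem_coe.1 hb
      have hr : (eqGraph G x).Reachable a b := (mem_blk.1 ha').symm.trans (mem_blk.1 hb')
      exact hr.elim fun p => walk_in_blk v p ha' hb'
    · exact ⟨⟨v, Finset.mem_coe.2 (blk_self v)⟩⟩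

lemma induce_walk_const {G : SimpleGraph V} {x : V → ℤ} {s : Set V}
    (hconst : ∀ u ∈ s, ∀ w ∈ s, x u = x w) :
    ∀ {a b : s}, (G.induce s).Walk a b → (eqGraph G x).Reachable a.1 b.1 := by
  intro a b p
  induction p with
  | nil => exact SimpleGraph.Reachable.refl _
  | @cons a c b hadj p ih =>
    have hG : G.Adj a.1 c.1 := by
      simpa only [SimpleGraph.comap_adj, Function.Embedding.coe_subtype] using hadj
    have hx : x a.1 = x c.1 := hconst a.1 a.2 c.1 c.2
    exact (SimpleGraph.Adj.reachable (show (eqGraph G x).Adj a.1 c.1 from ⟨hG, hx⟩)).trans ih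

/-- Key equivalence: `x` is constant on each block of `P` iff `P` refines `sig G x`. -/
lemma const_iff_finer {G : SimpleGraph V} {x : V → ℤ} {P : Finset (Finset V)}
    (hP : IsConnPartition G P) :
    (∀ W ∈ P, ∀ u ∈ W, ∀ v ∈ W, x u = x v) ↔
      ∀ W ∈ P, ∃ U ∈ sig G x, W ⊆ U := by
  constructor
  · intro hc W hW
    obtain ⟨v₀, hv₀⟩ := hP.1 W hW
    refine ⟨blk G x v₀, Finset.mem_image.2 ⟨v₀, Finset.mem_univ _, rfl⟩, ?_⟩
    intro u hu
    have hcon := hP.2.2 W hW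
    have hconst : ∀ a ∈ ((W : Finset V) : Set V), ∀ b ∈ ((W : Finset V) : Set V), x a = x b :=
      fun a ha b hb => hc W hW a (Finset.mem_coe.1 ha) b (Finset.mem_coe.1 hb)
    have hr := hcon.preconnected ⟨v₀, Finset.mem_coe.2 hv₀⟩ ⟨u, Finset.mem_coe.2 hu⟩
    exact mem_blk.2 (hr.elim fun p => induce_walk_const hconst p)
  · intro hf W hW u hu v hv
    obtain ⟨U, hU, hWU⟩ := hf W hW
    obtain ⟨w, -, rfl⟩ := Finset.mem_image.1 hU
    exact (reachable_const (mem_blk.1 (hWU hu))).symm.trans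
      (reachable_const (mem_blk.1 (hWU hv)))

lemma sig_eq_bot_iff {G : SimpleGraph V} {x : V → ℤ} :
    sig G x = Finset.univ.image (fun v : V => ({v} : Finset V)) ↔
      ∀ u v, G.Adj u v → x u ≠ x v := by
  constructor
  · intro hs u v hadj hx
    have hv : v ∈ blk G x u := mem_blk.2 (SimpleGraph.Adj.reachable (show (eqGraph G x).Adj u v from ⟨hadj, hx⟩))
    have hmem : blk G x u ∈ sig G x := Finset.mem_image.2 ⟨u, Finset.mem_univ _, rfl⟩
    rw [hs] at hmem
    obtain ⟨w, -, hw⟩ := Finset.mem_image.1 hmem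
    have hu : u ∈ blk G x u := blk_self u
    rw [← hw] at hu hv
    have : u = v := (Finset.mem_singleton.1 hu).trans (Finset.mem_singleton.1 hv).symm
    exact G.loopless.irrefl u (this ▸ hadj)
  · intro hp
    have hblk : ∀ v : V, blk G x v = {v} := by
      intro v
      ext w
      simp only [mem_blk, Finset.mem_singleton]
      constructor
      · intro hr
        refine hr.elim fun p => ?_
        cases p with
        | nil => rfl
        | cons h _ => exact absurd h.2 (hp _ _ h.1)
      · rintro rfl; exact SimpleGraph.Reachable.refl _
    unfold sig
    exact Finset.image_congr fun v _ => hblk v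

end Aux

lemma card_constOn {V : Type*} [Fintype V] [DecidableEq V]
    (G : SimpleGraph V) (h : V → ℤ) (m : ℤ) (hmax : Finset V → ℤ)
    (hhmax : ∀ W : Finset V, ∀ hW : W.Nonempty, hmax W = W.sup' hW h)
    {P : Finset (Finset V)} (hP : IsConnPartition G P) :
    (((Fintype.piFinset fun v => Finset.Icc (h v + 1) m).filter
      fun x => ∀ W ∈ P, ∀ u ∈ W, ∀ v ∈ W, x u = x v).card : ℤ)
      = ∏ W ∈ P, max (m - hmax W) 0 := by
  classical
  set A := Fintype.piFinset fun v : V => Finset.Icc (h v + 1) m with hA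
  have blkOf : ∀ v : V, ∃ W, W ∈ P ∧ v ∈ W := fun v => (hP.2.1 v).exists
  have blkOf_unique : ∀ v W, W ∈ P → v ∈ W → (blkOf v).choose = W := fun v W hW hv =>
    (hP.2.1 v).unique ⟨(blkOf v).choose_spec.1, (blkOf v).choose_spec.2⟩ ⟨hW, hv⟩
  have key : (A.filter fun x => ∀ W ∈ P, ∀ u ∈ W, ∀ v ∈ W, x u = x v).card
      = (P.pi fun W => Finset.Icc (hmax W + 1) m).card := by
    refine Finset.card_bij' (fun x _ W hW => x ((hP.1 W hW).choose))
      (fun f _ v => f ((blkOf v).choose) ((blkOf v).choose_spec.1)) ?_ ?_ ?_ ?_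
    · intro x hx
      obtain ⟨hxA, hxc⟩ := Finset.mem_filter.1 hx
      rw [Fintype.mem_piFinset] at hxA
      rw [Finset.mem_pi]
      intro W hW
      have hpick := (hP.1 W hW).choose_spec
      rw [Finset.mem_Icc]
      constructor
      · rw [Int.add_one_le_iff, hhmax W (hP.1 W hW), Finset.sup'_lt_iff]
        intro u hu
        have := (Finset.mem_Icc.1 (hxA u)).1
        rw [Int.add_one_le_iff] at this
        exact this.trans_eq (hxc W hW u hu _ hpick)
      · exact (Finset.mem_Icc.1 (hxA _)).2
    · intro f hf
      rw [Finset.mem_pi] at hf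
      rw [Finset.mem_filter]
      constructor
      · rw [Fintype.mem_piFinset]
        intro v
        have hb := (blkOf v).choose_spec
        have hfv := Finset.mem_Icc.1 (hf _ hb.1)
        rw [Finset.mem_Icc]
        refine ⟨?_, hfv.2⟩
        have h1 : h v ≤ hmax ((blkOf v).choose) := by
          rw [hhmax _ ⟨v, hb.2⟩]
          exact Finset.le_sup' h hb.2
        linarith [hfv.1]
      · intro W hW u hu v hv
        have e1 : (blkOf u).choose = W := blkOf_unique u W hW hu
        have e2 : (blkOf v).choose = W := blkOf_unique v W hW hv
        simp only [e1, e2]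
    · intro x hx
      obtain ⟨hxA, hxc⟩ := Finset.mem_filter.1 hx
      funext v
      have hb := (blkOf v).choose_spec
      have hpick := (hP.1 _ hb.1).choose_spec
      exact hxc _ hb.1 _ hpick _ hb.2
    · intro f hf
      funext W hW
      have hpick := (hP.1 W hW).choose_spec
      have e : (blkOf ((hP.1 W hW).choose)).choose = W := blkOf_unique _ W hW hpick
      simp only [e]
  rw [key, Finset.card_pi]
  push_cast
  refine Finset.prod_congr rfl fun W hW => ?_
  rw [Int.card_Icc]
  have e : m + 1 - (hmax W + 1) = m - hmax W := by ring
  rw [e, Int.toNat_eq_max]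

/-- **Corollary 5.1** (interval graph coloring).  For a simple graph `G` on a finite vertex set,
`h : V → ℤ`, and an integer `m`, the number of proper colorations with `x v ∈ (h v, m]` equals
`∑_{π ∈ Π(G)} μ(0̂, π) ∏_{W ∈ π} (m − h(W))⁺`, where `h(W) = max_{v ∈ W} h v`.
Here `mu` is the Möbius function of the refinement poset `Π(G)` with bottom element the
partition into singletons (characterized by `hmu`), and `hmax W = max_{v ∈ W} h v`
(characterized by `hhmax`). -/
theorem interval_graph_coloring {V : Type*} [Fintype V] [DecidableEq V]
    (G : SimpleGraph V) (h : V → ℤ) (m : ℤ)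
    (mu : Finset (Finset V) → ℤ)
    (hmu : ∀ P ∈ connPartitions G,
      ∑ Q ∈ (connPartitions G).filter (fun Q => ∀ W ∈ Q, ∃ U ∈ P, W ⊆ U), mu Q =
        if P = Finset.univ.image (fun v : V => ({v} : Finset V)) then 1 else 0)
    (hmax : Finset V → ℤ)
    (hhmax : ∀ W : Finset V, ∀ hW : W.Nonempty, hmax W = W.sup' hW h) :
    (intervalChromatic G h m : ℤ) =
      ∑ P ∈ connPartitions G, mu P * ∏ W ∈ P, max (m - hmax W) 0 := by
  classical
  set A := Fintype.piFinset fun v : V => Finset.Icc (h v + 1) m with hA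
  have hLHS : (intervalChromatic G h m : ℤ)
      = ((A.filter fun x => ∀ u v, G.Adj u v → x u ≠ x v).card : ℤ) := by
    congr 1
    rw [intervalChromatic]
    rw [Nat.card_congr (Equiv.subtypeEquivRight
      (q := fun x => x ∈ A.filter fun x => ∀ u v, G.Adj u v → x u ≠ x v) (fun x => ?_))]
    · rw [Nat.card_eq_finsetCard]
    · simp only [Finset.mem_filter, hA, Fintype.mem_piFinset, Finset.mem_Icc,
        Int.add_one_le_iff]
  rw [hLHS]
  have hprod : ∀ P ∈ connPartitions G,
      mu P * ∏ W ∈ P, max (m - hmax W) 0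
        = mu P * ((A.filter fun x => ∀ W ∈ P, ∀ u ∈ W, ∀ v ∈ W, x u = x v).card : ℤ) := by
    intro P hP
    rw [card_constOn G h m hmax hhmax (Finset.mem_filter.1 hP).2]
  rw [Finset.sum_congr rfl hprod]
  have step1 : ∀ P ∈ connPartitions G,
      mu P * ((A.filter fun x => ∀ W ∈ P, ∀ u ∈ W, ∀ v ∈ W, x u = x v).card : ℤ)
        = ∑ x ∈ A, (if ∀ W ∈ P, ∀ u ∈ W, ∀ v ∈ W, x u = x v then mu P else 0) := by
    intro P _
    rw [Finset.card_filter]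
    push_cast
    rw [Finset.mul_sum]
    refine Finset.sum_congr rfl fun x _ => ?_
    split <;> simp
  rw [Finset.sum_congr rfl step1, Finset.sum_comm]
  have step2 : ∀ x ∈ A,
      (∑ P ∈ connPartitions G, if ∀ W ∈ P, ∀ u ∈ W, ∀ v ∈ W, x u = x v then mu P else 0)
        = if ∀ u v, G.Adj u v → x u ≠ x v then 1 else 0 := by
    intro x _
    rw [← Finset.sum_filter]
    have hfil : (connPartitions G).filter (fun P => ∀ W ∈ P, ∀ u ∈ W, ∀ v ∈ W, x u = x v)
        = (connPartitions G).filter (fun Q => ∀ W ∈ Q, ∃ U ∈ sig G x, W ⊆ U) := by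
      refine Finset.filter_congr fun P hP => ?_
      exact const_iff_finer (Finset.mem_filter.1 hP).2
    rw [hfil, hmu (sig G x)
      (Finset.mem_filter.2 ⟨Finset.mem_univ _, sig_isConnPartition G x⟩)]
    simp only [sig_eq_bot_iff]
  rw [Finset.sum_congr rfl step2, ← Finset.sum_filter, Finset.sum_const, Finset.card_filter]
  simp
end

section
/- Deletion–contraction for the modular chromatic function (end of Section 6). Let n ≥ 1, let E be a finite set of triples (u,v,g') with u,v ∈ {1,…,n} and g' ∈ ℤ, let m ≥ 1, and let χ^mod(E,m) be the number of maps x : {1,…,n} → ℤ/mℤ with x_v ≠ x_u + g' (mod m) for all (u,v,g') ∈ E. Let e = (i,j,g) ∈ E with i ≠ j. Define η : {1,…,n} → ℤ by η_i = g and η_v = 0 for v ≠ i; define q(i) = j and q(v) = v otherwise; and let E/e := { (q(u), q(v), g' + η_v − η_u) : (u,v,g') ∈ E ∖ {e} }, a finite set of triples on the vertex set V' := {1,…,n}∖{i}. Then χ^mod(E,m) = χ^mod(E∖{e},m) − χ^mod(E/e,m), where χ^mod(E/e,m) is the analogous count of maps x : V' → ℤ/mℤ. -/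
open Finset
open scoped Classical

/-- The number of proper modular colorations of the integral gain graph `E` on the finite
vertex set `V` with colors in `ℤ/mℤ`: maps `x : V → ℤ/mℤ` with `x v ≠ x u + g' (mod m)` for
every edge `(u, v, g') ∈ E`. -/
noncomputable def modChi {V : Type*} [Fintype V] (E : Finset (V × V × ℤ)) (m : ℕ) : ℕ :=
  Nat.card {x : V → ZMod m // ∀ e ∈ E, x e.2.1 ≠ x e.1 + (e.2.2 : ZMod m)}

/-- **Deletion–contraction for the modular chromatic function** (end of Section 6).
For an integral gain graph `E` on `{1, …, n}`, a modulus `m ≥ 1`, and a nonloop edge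
`e = (i, j, g) ∈ E`, the number of proper modular colorations satisfies
`χ^mod(E, m) = χ^mod(E ∖ {e}, m) − χ^mod(E/e, m)`, where `E/e` lives on the vertex set
`{1, …, n} ∖ {i}` and its edges are `(q u, q v, g' + η v − η u)` for `(u, v, g') ∈ E ∖ {e}`. -/
theorem modular_deletion_contraction (n : ℕ) (hn : 1 ≤ n)
    (E : Finset (Fin n × Fin n × ℤ)) (m : ℕ) (hm : 1 ≤ m)
    (i j : Fin n) (g : ℤ) (hij : i ≠ j) (he : (i, j, g) ∈ E) :
    (modChi E m : ℤ) =
      (modChi (E.erase (i, j, g)) m : ℤ) -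
      (modChi
        ((E.erase (i, j, g)).image fun e =>
          (contrMap i j hij e.1, contrMap i j hij e.2.1,
            e.2.2 + contrEta i g e.2.1 - contrEta i g e.1))
        m : ℤ) := by
  haveI : NeZero m := ⟨by omega⟩
  classical
  set E' : Finset (Fin n × Fin n × ℤ) := E.erase (i, j, g) with hE'
  set EC : Finset ({v : Fin n // v ≠ i} × {v : Fin n // v ≠ i} × ℤ) :=
    E'.image fun e =>
      (contrMap i j hij e.1, contrMap i j hij e.2.1,
        e.2.2 + contrEta i g e.2.1 - contrEta i g e.1) with hEC
  set P : (Fin n → ZMod m) → Prop :=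
    fun x => ∀ e ∈ E', x e.2.1 ≠ x e.1 + (e.2.2 : ZMod m) with hP
  set Q : (Fin n → ZMod m) → Prop := fun x => x j = x i + (g : ZMod m) with hQ
  -- E-proper iff P ∧ ¬Q
  have hEdecomp : ∀ x : Fin n → ZMod m,
      (∀ e ∈ E, x e.2.1 ≠ x e.1 + (e.2.2 : ZMod m)) ↔ (P x ∧ ¬ Q x) := by
    intro x
    constructor
    · intro h
      refine ⟨fun e he' => h e (Finset.mem_of_mem_erase he'), ?_⟩
      exact h (i, j, g) he
    · rintro ⟨h1, h2⟩ e he'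
      rcases eq_or_ne e (i, j, g) with rfl | hne
      · exact h2
      · exact h1 e (Finset.mem_erase.mpr ⟨hne, he'⟩)
  -- contraction bijection
  have econtr :
      {x : Fin n → ZMod m // P x ∧ Q x} ≃
      {y : {v : Fin n // v ≠ i} → ZMod m //
        ∀ e ∈ EC, y e.2.1 ≠ y e.1 + (e.2.2 : ZMod m)} := by
    refine ⟨fun x => ⟨fun v => x.1 v.1, ?_⟩,
            fun y => ⟨fun v => y.1 (contrMap i j hij v) - ((contrEta i g v : ℤ) : ZMod m), ?_⟩,
            ?_, ?_⟩
    · obtain ⟨x, hxP, hxQ⟩ := x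
      have key : ∀ v : Fin n,
          x (contrMap i j hij v).1 = x v + ((contrEta i g v : ℤ) : ZMod m) := by
        intro v
        by_cases hv : v = i
        · subst hv
          simp only [contrMap, contrEta, dif_pos rfl, if_pos rfl]
          exact hxQ
        · simp [contrMap, contrEta, hv]
      rintro e' he'
      rw [hEC, Finset.mem_image] at he'
      obtain ⟨⟨u, v, g'⟩, huv, rfl⟩ := he'
      simp only [key]
      have h0 := hxP (u, v, g') huv
      intro h
      apply h0
      push_cast at h ⊢
      linear_combination h
    · obtain ⟨y, hy⟩ := y
      constructor
      · rintro ⟨u, v, g'⟩ huv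
        have h0 := hy (contrMap i j hij u, contrMap i j hij v,
          g' + contrEta i g v - contrEta i g u)
          (by rw [hEC, Finset.mem_image]; exact ⟨(u, v, g'), huv, rfl⟩)
        intro h
        apply h0
        push_cast at h ⊢
        linear_combination h
      · show y (contrMap i j hij j) - _ = y (contrMap i j hij i) - _ + _
        simp [contrMap, contrEta, hij.symm, sub_add_cancel]
    · rintro ⟨x, hxP, hxQ⟩
      ext v
      by_cases hv : v = i
      · replace hxQ : x j = x i + (g : ZMod m) := hxQ
        show x (contrMap i j hij v).1 - ((contrEta i g v : ℤ) : ZMod m) = x v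
        rw [contrMap, contrEta, dif_pos hv, if_pos hv, hxQ, hv]
        push_cast; ring
      · simp [contrMap, contrEta, hv]
    · rintro ⟨y, hy⟩
      ext v
      have hv : v.1 ≠ i := v.2
      simp only [contrMap, contrEta, dif_neg hv, if_neg hv]
      simp
  -- cardinalities
  have c1 : modChi E m = Nat.card {x : Fin n → ZMod m // P x ∧ ¬ Q x} := by
    unfold modChi
    exact Nat.card_congr (Equiv.subtypeEquivRight hEdecomp)
  have c2 : modChi EC m = Nat.card {x : Fin n → ZMod m // P x ∧ Q x} :=
    (Nat.card_congr econtr.symm).symm ▸ rfl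
  have c3 : modChi E' m =
      Nat.card {x : Fin n → ZMod m // P x ∧ Q x} +
      Nat.card {x : Fin n → ZMod m // P x ∧ ¬ Q x} := by
    unfold modChi
    rw [Nat.card_eq_fintype_card, Nat.card_eq_fintype_card, Nat.card_eq_fintype_card]
    rw [Fintype.card_subtype, Fintype.card_subtype, Fintype.card_subtype]
    rw [← Finset.filter_filter, ← Finset.filter_filter]
    rw [Finset.card_filter_add_card_filter_not (p := Q)]
  rw [c1, c3]
  have c2' : (modChi EC m : ℤ) = (Nat.card {x : Fin n → ZMod m // P x ∧ Q x} : ℤ) := by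
    rw [modChi, Nat.card_congr econtr.symm]
  rw [c2']
  push_cast
  ring
end

section
/- Shi arrangement count (Equation 4). For all integers n ≥ 1 and m ≥ 0: N_{[0,1]}(n,m) = (m − n + 1)^n if m ≥ n, and N_{[0,1]}(n,m) = 0 if m < n. Equivalently, the number of integer points of [1,m]^n lying on none of the hyperplanes x_j = x_i and x_j = x_i + 1 (1 ≤ i < j ≤ n) of the Shi arrangement is (m − n + 1)^n when m ≥ n and 0 otherwise. -/
open Finset

/-- `latticeCount a b n m` is `N_{[a,b]}(n,m)`: the number of maps `x : {1, …, n} → ℤ` with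
`1 ≤ x i ≤ m` for all `i` and `x j ≠ x i + g` for all `i < j` and all gains `g` with
`a ≤ g ≤ b`.  Equivalently, the number of integer points of the cube `[1, m]^n` lying on none
of the affinographic hyperplanes `x j = x i + g` (`i < j`, `a ≤ g ≤ b`). -/
noncomputable def latticeCount (a b : ℤ) (n : ℕ) (m : ℤ) : ℕ :=
  Nat.card {x : Fin n → ℤ // (∀ v, 1 ≤ x v ∧ x v ≤ m) ∧
    ∀ i j : Fin n, i < j → ∀ g : ℤ, a ≤ g → g ≤ b → x j ≠ x i + g}

/-- `eulerianNumber n r` is the Eulerian number `A(n, r + 1)`: the number of permutations `σ`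
of `{1, …, n}` with exactly `r` ascents, an ascent being an index `1 ≤ i ≤ n − 1` with
`σ(i) < σ(i+1)`. -/
noncomputable def eulerianNumber (n r : ℕ) : ℕ :=
  Nat.card {σ : Equiv.Perm (Fin n) //
    Nat.card {i : ℕ // ∃ h1 : i + 1 < n,
      σ ⟨i, Nat.lt_of_succ_lt h1⟩ < σ ⟨i + 1, h1⟩} = r}

/-- The binomial coefficient `C(t, n)` for an integer `t`, interpreted as `0` when `t < n`
(in particular when `t < 0`). -/
def intChoose (t : ℤ) (n : ℕ) : ℕ := t.toNat.choose n

section ShiAux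

variable {n : ℕ}

/-- Lex-by-(value, index) strict order used to rank coordinates. -/
private def RR (z : Fin n → ℤ) (i j : Fin n) : Prop :=
  z j < z i ∨ (z j = z i ∧ i < j)

private instance (z : Fin n → ℤ) (i : Fin n) : DecidablePred (RR z i) := fun j => by
  unfold RR; infer_instance

private lemma RR_irrefl (z : Fin n → ℤ) (i : Fin n) : ¬ RR z i i := by
  simp [RR]

private lemma RR_trans {z : Fin n → ℤ} {i j k : Fin n} (h1 : RR z i j) (h2 : RR z j k) :
    RR z i k := by
  rcases h1 with h1 | ⟨h1, h1'⟩ <;> rcases h2 with h2 | ⟨h2, h2'⟩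
  · exact Or.inl (h2.trans h1)
  · exact Or.inl (h2 ▸ h1)
  · exact Or.inl (h1 ▸ h2)
  · exact Or.inr ⟨h2.trans h1, h1'.trans h2'⟩

private lemma RR_total {z : Fin n → ℤ} {i j : Fin n} (h : i ≠ j) : RR z i j ∨ RR z j i := by
  rcases lt_trichotomy (z j) (z i) with hz | hz | hz
  · exact Or.inl (Or.inl hz)
  · rcases lt_or_gt_of_ne h with hij | hij
    · exact Or.inl (Or.inr ⟨hz, hij⟩)
    · exact Or.inr (Or.inr ⟨hz.symm, hij⟩)
  · exact Or.inr (Or.inl hz)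

private def rk (z : Fin n → ℤ) (i : Fin n) : ℕ := (univ.filter (RR z i)).card

private def fwd (z : Fin n → ℤ) (i : Fin n) : ℤ := z i + rk z i

private lemma rk_lt {z : Fin n → ℤ} {i j : Fin n} (h : RR z i j) : rk z j < rk z i := by
  apply Finset.card_lt_card
  constructor
  · intro k hk
    simp only [mem_filter, mem_univ, true_and] at hk ⊢
    exact RR_trans h hk
  · intro hsub
    have : j ∈ univ.filter (RR z i) := by simp [h]
    have := hsub this
    simp only [mem_filter, mem_univ, true_and] at this
    exact RR_irrefl z j this

private lemma rk_le (z : Fin n → ℤ) (i : Fin n) : rk z i ≤ n - 1 := by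
  have : univ.filter (RR z i) ⊆ univ.erase i := by
    intro k hk
    simp only [mem_filter, mem_univ, true_and] at hk
    refine Finset.mem_erase.2 ⟨?_, mem_univ _⟩
    rintro rfl; exact RR_irrefl z _ hk
  calc rk z i ≤ (univ.erase i).card := Finset.card_le_card this
    _ = n - 1 := by rw [Finset.card_erase_of_mem (mem_univ i), Finset.card_univ, Fintype.card_fin]

private lemma fwd_lt {z : Fin n → ℤ} {i j : Fin n} (h : RR z i j) : fwd z j < fwd z i := by
  have h1 : z j ≤ z i := by rcases h with h | ⟨h, _⟩; exact h.le; exact h.le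
  have h2 : rk z j < rk z i := rk_lt h
  unfold fwd; omega

private lemma fwd_lt_iff {z : Fin n → ℤ} {i j : Fin n} : fwd z j < fwd z i ↔ RR z i j := by
  constructor
  · intro h
    by_contra hR
    rcases eq_or_ne i j with rfl | hne
    · exact lt_irrefl _ h
    · rcases RR_total hne with h' | h'
      · exact hR h'
      · exact absurd (fwd_lt h') (by omega)
  · exact fwd_lt

private lemma fwd_add_two {z : Fin n → ℤ} {i j : Fin n} (h : z i < z j) :
    fwd z i + 2 ≤ fwd z j := by
  have h2 : rk z i < rk z j := rk_lt (Or.inl h)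
  unfold fwd; omega

/-- rank by value only -/
private def srk (x : Fin n → ℤ) (i : Fin n) : ℕ := (univ.filter (fun j => x j < x i)).card

private def bwd (x : Fin n → ℤ) (i : Fin n) : ℤ := x i - srk x i

section backward

variable {m : ℤ} {x : Fin n → ℤ}
  (hx1 : ∀ v, 1 ≤ x v ∧ x v ≤ m)
  (hx2 : ∀ i j : Fin n, i < j → ∀ g : ℤ, 0 ≤ g → g ≤ 1 → x j ≠ x i + g)

include hx2 in
private lemma x_inj : Function.Injective x := by
  intro i j hij
  by_contra hne
  rcases lt_or_gt_of_ne hne with h | h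
  · exact hx2 i j h 0 le_rfl zero_le_one (by omega)
  · exact hx2 j i h 0 le_rfl zero_le_one (by omega)

include hx2 in
private lemma x_step {i j : Fin n} (h : x j = x i + 1) : j < i := by
  rcases lt_trichotomy i j with hij | rfl | hij
  · exact absurd h (hx2 i j hij 1 zero_le_one le_rfl)
  · omega
  · exact hij

include hx2 in
private lemma srk_lt {i j : Fin n} (h : x j < x i) : srk x j < srk x i := by
  apply Finset.card_lt_card
  constructor
  · intro k hk
    simp only [mem_filter, mem_univ, true_and] at hk ⊢
    exact hk.trans h
  · intro hsub
    have : j ∈ univ.filter (fun k => x k < x i) := by simp [h]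
    have := hsub this
    simp only [mem_filter, mem_univ, true_and] at this
    exact lt_irrefl _ this

/-- the middle count: number of k with x j ≤ x k < x i -/
private lemma srk_split {i j : Fin n} (h : x j < x i) :
    srk x i = srk x j + (univ.filter (fun k => x j ≤ x k ∧ x k < x i)).card := by
  unfold srk
  rw [← Finset.card_union_of_disjoint]
  · congr 1
    ext k
    simp only [mem_union, mem_filter, mem_univ, true_and]
    constructor
    · intro hk; rcases le_or_gt (x j) (x k) with h' | h'
      · exact Or.inr ⟨h', hk⟩
      · exact Or.inl h'
    · rintro (hk | ⟨_, hk⟩)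
      · exact hk.trans h
      · exact hk
  · rw [Finset.disjoint_left]
    intro k hk hk'
    simp only [mem_filter, mem_univ, true_and] at hk hk'
    omega

include hx2 in
private lemma mid_card_le {i j : Fin n} (h : x j < x i) :
    ((univ.filter (fun k => x j ≤ x k ∧ x k < x i)).card : ℤ) ≤ x i - x j := by
  have := Finset.card_le_card_of_injOn (f := x)
    (s := univ.filter (fun k => x j ≤ x k ∧ x k < x i)) (t := Finset.Ico (x j) (x i))
    (by intro k hk
        simp only [mem_coe, mem_filter, mem_univ, true_and] at hk
        exact Finset.mem_Ico.2 hk)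
    (fun a _ b _ hab => x_inj hx2 hab)
  rw [Int.card_Ico] at this
  omega

include hx2 in
private lemma bwd_mono {i j : Fin n} (h : x j < x i) : bwd x j ≤ bwd x i := by
  have h1 := srk_split (x := x) h
  have h2 := mid_card_le hx2 h
  unfold bwd; omega

include hx2 in
private lemma bwd_eq_lt : ∀ d : ℕ, ∀ i j : Fin n, x j < x i → (x i - x j).toNat = d →
    bwd x i = bwd x j → i < j := by
  intro d
  induction d using Nat.strong_induction_on with
  | _ d ih =>
    intro i j hlt hd heq
    have h1 := srk_split (x := x) hlt
    have hcard : ((univ.filter (fun k => x j ≤ x k ∧ x k < x i)).card : ℤ) = x i - x j := by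
      unfold bwd at heq; omega
    -- image equals the whole interval
    have himg : Finset.image x (univ.filter (fun k => x j ≤ x k ∧ x k < x i))
        = Finset.Ico (x j) (x i) := by
      apply Finset.eq_of_subset_of_card_le
      · intro v hv
        simp only [Finset.mem_image, mem_filter, mem_univ, true_and] at hv
        obtain ⟨k, hk, rfl⟩ := hv
        exact Finset.mem_Ico.2 hk
      · rw [Int.card_Ico, Finset.card_image_of_injective _ (x_inj hx2)]
        omega
    have hmem : x i - 1 ∈ Finset.Ico (x j) (x i) := Finset.mem_Ico.2 (by omega)
    rw [← himg] at hmem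
    obtain ⟨k, hk, hxk⟩ := Finset.mem_image.1 hmem
    simp only [mem_filter, mem_univ, true_and] at hk
    have hik : i < k := x_step hx2 (by omega)
    rcases eq_or_lt_of_le hk.1 with hkj | hkj
    · have : k = j := x_inj hx2 hkj.symm
      omega
    · -- x j < x k < x i; apply IH on (k, j)
      have hbk : bwd x k = bwd x j := le_antisymm
        (by have := bwd_mono hx2 (show x k < x i by omega); omega)
        (bwd_mono hx2 hkj)
      have : k < j := ih (x k - x j).toNat (by omega) k j hkj rfl hbk
      omega

include hx2 in
private lemma bwd_iff {i j : Fin n} : x j < x i ↔ RR (bwd x) i j := by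
  constructor
  · intro h
    rcases eq_or_lt_of_le (bwd_mono hx2 h) with heq | hlt
    · exact Or.inr ⟨heq, bwd_eq_lt hx2 _ i j h rfl heq.symm⟩
    · exact Or.inl hlt
  · intro h
    by_contra hlt
    rcases eq_or_ne i j with rfl | hne
    · exact RR_irrefl _ i h
    rcases lt_or_gt_of_ne (fun hv => hne (x_inj hx2 hv)) with h' | h'
    · -- x i < x j
      rcases eq_or_lt_of_le (bwd_mono hx2 h') with heq | hlt'
      · have := bwd_eq_lt hx2 (x j - x i).toNat j i h' rfl heq.symm
        rcases h with h | ⟨_, h⟩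
        · omega
        · omega
      · rcases h with h | ⟨h, _⟩ <;> omega
    · exact hlt h'

include hx2 in
private lemma srk_eq_rk (i : Fin n) : srk x i = rk (bwd x) i := by
  unfold srk rk
  congr 1
  ext j
  simp only [mem_filter, mem_univ, true_and]
  exact bwd_iff hx2

include hx2 in
private lemma fwd_bwd (i : Fin n) : fwd (bwd x) i = x i := by
  unfold fwd
  rw [← srk_eq_rk hx2]
  unfold bwd
  have : (srk x i : ℤ) ≤ x i ∨ True := Or.inr trivial
  ring

include hx1 hx2 in
private lemma bwd_lower (i : Fin n) : 1 ≤ bwd x i := by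
  have hle : (srk x i : ℤ) ≤ x i - 1 := by
    have := Finset.card_le_card_of_injOn (f := x)
      (s := univ.filter (fun j => x j < x i)) (t := Finset.Icc 1 (x i - 1))
      (by intro k hk
          simp only [mem_coe, mem_filter, mem_univ, true_and] at hk
          exact Finset.mem_Icc.2 ⟨(hx1 k).1, by omega⟩)
      (fun a _ b _ hab => x_inj hx2 hab)
    rw [Int.card_Icc] at this
    have h1 := (hx1 i).1
    unfold srk; omega
  unfold bwd; omega

include hx1 hx2 in
private lemma bwd_upper (i : Fin n) : bwd x i ≤ m - n + 1 := by
  have hbig : ((univ.filter (fun j => x i < x j)).card : ℤ) ≤ m - x i := by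
    have := Finset.card_le_card_of_injOn (f := x)
      (s := univ.filter (fun j => x i < x j)) (t := Finset.Icc (x i + 1) m)
      (by intro k hk
          simp only [mem_coe, mem_filter, mem_univ, true_and] at hk
          exact Finset.mem_Icc.2 ⟨by omega, (hx1 k).2⟩)
      (fun a _ b _ hab => x_inj hx2 hab)
    rw [Int.card_Icc] at this
    have hxm := (hx1 i).2
    omega
  have hsplit : srk x i + (univ.filter (fun j => x i < x j)).card + 1 = n := by
    have : univ.filter (fun j => x j < x i) ∪ univ.filter (fun j => x i < x j) ∪ {i}
        = (univ : Finset (Fin n)) := by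
      ext k
      simp only [mem_union, mem_filter, mem_univ, true_and, Finset.mem_singleton, iff_true]
      rcases lt_trichotomy (x k) (x i) with h | h | h
      · exact Or.inl (Or.inl h)
      · exact Or.inr (x_inj hx2 h)
      · exact Or.inl (Or.inr h)
    have hd1 : Disjoint (univ.filter (fun j => x j < x i)) (univ.filter (fun j => x i < x j)) := by
      rw [Finset.disjoint_left]
      intro k hk hk'
      simp only [mem_filter, mem_univ, true_and] at hk hk'
      omega
    have hd2 : Disjoint (univ.filter (fun j => x j < x i) ∪ univ.filter (fun j => x i < x j))
        ({i} : Finset (Fin n)) := by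
      rw [Finset.disjoint_right]
      intro k hk
      rw [Finset.mem_singleton] at hk
      subst hk
      simp only [mem_union, mem_filter, mem_univ, true_and]
      omega
    have := congrArg Finset.card this
    rw [Finset.card_union_of_disjoint hd2, Finset.card_union_of_disjoint hd1,
      Finset.card_univ, Fintype.card_fin, Finset.card_singleton] at this
    unfold srk; omega
  unfold bwd; omega

end backward

section forward

variable {m : ℤ} {z : Fin n → ℤ} (hz : ∀ i, 1 ≤ z i ∧ z i ≤ m - n + 1)

include hz in
private lemma fwd_lower (i : Fin n) : 1 ≤ fwd z i := by
  have := (hz i).1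
  have : (0:ℤ) ≤ rk z i := Int.natCast_nonneg _
  unfold fwd; omega

include hz in
private lemma fwd_upper (i : Fin n) : fwd z i ≤ m := by
  have h1 := (hz i).2
  have h2 := rk_le z i
  have hn : 1 ≤ n := i.pos
  have : (rk z i : ℤ) ≤ (n : ℤ) - 1 := by omega
  unfold fwd; omega

private lemma fwd_valid (i j : Fin n) (hij : i < j) (g : ℤ) (hg0 : 0 ≤ g) (hg1 : g ≤ 1) :
    fwd z j ≠ fwd z i + g := by
  intro heq
  interval_cases g
  · rcases RR_total (z := z) (show i ≠ j by omega) with h | h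
    · exact absurd (fwd_lt h) (by omega)
    · exact absurd (fwd_lt h) (by omega)
  · -- fwd z j = fwd z i + 1 > fwd z i, hence RR z j i
    have hR : RR z j i := fwd_lt_iff.1 (by omega)
    rcases hR with h | ⟨_, h⟩
    · exact absurd (fwd_add_two h) (by omega)
    · omega

private lemma bwd_fwd (i : Fin n) : bwd (fwd z) i = z i := by
  have : srk (fwd z) i = rk z i := by
    unfold srk rk
    congr 1
    ext j
    simp only [mem_filter, mem_univ, true_and]
    exact fwd_lt_iff
  unfold bwd
  rw [this]
  unfold fwd; ring

end forward

end ShiAux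

private def shiEquiv (m : ℤ) (n : ℕ) :
    {x : Fin n → ℤ // (∀ v, 1 ≤ x v ∧ x v ≤ m) ∧
      ∀ i j : Fin n, i < j → ∀ g : ℤ, 0 ≤ g → g ≤ 1 → x j ≠ x i + g} ≃
    {z : Fin n → ℤ // ∀ i, 1 ≤ z i ∧ z i ≤ m - n + 1} where
  toFun := fun ⟨x, hx1, hx2⟩ =>
    ⟨bwd x, fun i => ⟨bwd_lower hx1 hx2 i, bwd_upper hx1 hx2 i⟩⟩
  invFun := fun ⟨z, hz⟩ =>
    ⟨fwd z, ⟨fun i => ⟨fwd_lower hz i, fwd_upper hz i⟩, fun i j hij g hg0 hg1 =>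
      fwd_valid i j hij g hg0 hg1⟩⟩
  left_inv := fun ⟨x, hx1, hx2⟩ => Subtype.ext (funext (fwd_bwd hx2))
  right_inv := fun ⟨z, hz⟩ => Subtype.ext (funext bwd_fwd)

private lemma card_box (n : ℕ) (c : ℤ) :
    Nat.card {z : Fin n → ℤ // ∀ i, 1 ≤ z i ∧ z i ≤ c} = c.toNat ^ n := by
  have e1 : {z : Fin n → ℤ // ∀ i, 1 ≤ z i ∧ z i ≤ c} ≃ (Fin n → (Finset.Icc (1:ℤ) c)) :=
    (Equiv.subtypePiEquivPi (p := fun (_ : Fin n) (b : ℤ) => 1 ≤ b ∧ b ≤ c)).trans (Equiv.piCongrRight fun i =>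
      Equiv.subtypeEquivRight (fun b => (Finset.mem_Icc).symm))
  rw [Nat.card_congr e1, Nat.card_fun]
  congr 1
  · rw [Nat.card_eq_finsetCard, Int.card_Icc]
    congr 1
    omega
  · simp


/-- **Shi arrangement count** (Equation 4).  For `n ≥ 1` and `m ≥ 0`, the number of integer
points of `[1, m]^n` lying on none of the hyperplanes `x j = x i` and `x j = x i + 1`
(`1 ≤ i < j ≤ n`) of the Shi arrangement is `(m − n + 1)^n` when `m ≥ n` and `0` otherwise. -/
theorem shi_count (n : ℕ) (hn : 1 ≤ n) (m : ℤ) (hm : 0 ≤ m) :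
    (latticeCount 0 1 n m : ℤ) = if (n : ℤ) ≤ m then (m - n + 1) ^ n else 0 := by
  have key : latticeCount 0 1 n m = (m - (n : ℤ) + 1).toNat ^ n := by
    unfold latticeCount
    rw [Nat.card_congr (shiEquiv m n), card_box]
  rw [key]
  split_ifs with h
  · rw [Nat.cast_pow, Int.toNat_of_nonneg (by omega)]
  · rw [Int.toNat_of_nonpos (by omega), zero_pow (by omega)]
    simp
end

section
/- Extended Shi arrangement count. For all integers n ≥ 1, s ≥ 1, and m: N_{[−s+1, s]}(n,m) = (m − s(n−1))^n if m ≥ n + (s−1)(n−1), and N_{[−s+1, s]}(n,m) = 0 if m < n + (s−1)(n−1). Equivalently, the number of integer points of [1,m]^n lying on none of the hyperplanes x_j = x_i + g (1 ≤ i < j ≤ n, −s+1 ≤ g ≤ s) of the extended Shi arrangement S_n(s) is (m − s(n−1))^n when m ≥ n + (s−1)(n−1) and 0 otherwise. -/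
open Finset

namespace ShiProof

variable {n : ℕ}

/-- rank: number of indices with strictly smaller value -/
def rk (x : Fin n → ℤ) (i : Fin n) : ℕ := (univ.filter fun j => x j < x i).card
/-- corank -/
def rk' (x : Fin n → ℤ) (i : Fin n) : ℕ := (univ.filter fun j => x i < x j).card
/-- lex rank with ties broken by decreasing index -/
def lrk (y : Fin n → ℤ) (i : Fin n) : ℕ :=
  (univ.filter fun j => y j < y i ∨ (y j = y i ∧ i < j)).card

section X

variable {s m : ℤ} {x : Fin n → ℤ}
  (hs : 1 ≤ s)
  (hb : ∀ v, 1 ≤ x v ∧ x v ≤ m)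
  (hx : ∀ i j : Fin n, i < j → ∀ g : ℤ, -s + 1 ≤ g → g ≤ s → x j ≠ x i + g)

include hs hx

lemma valNe {i j : Fin n} (h : i ≠ j) : x i ≠ x j := by
  rcases lt_or_gt_of_ne h with hlt | hlt
  · intro he; exact hx i j hlt 0 (by omega) (by omega) (by omega)
  · intro he; exact hx j i hlt 0 (by omega) (by omega) (by omega)

lemma gap1 {i j : Fin n} (h : i ≠ j) (hv : x i < x j) : x i + s ≤ x j := by
  rcases lt_or_gt_of_ne h with hlt | hlt
  · by_contra hc
    exact hx i j hlt (x j - x i) (by omega) (by omega) (by omega)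
  · by_contra hc
    exact hx j i hlt (x i - x j) (by omega) (by omega) (by omega)

lemma gap2 {i j : Fin n} (h : i < j) (hv : x i < x j) : x i + s + 1 ≤ x j := by
  by_contra hc
  exact hx i j h (x j - x i) (by omega) (by omega) (by omega)

omit hs hx in
lemma rkMono' {i j : Fin n} (hv : x j < x i) (hne : ∀ l, l ≠ j → x l ≠ x j) :
    rk x j < rk x i := by
  apply Finset.card_lt_card
  constructor
  · intro l hl
    simp only [mem_filter, mem_univ, true_and] at hl ⊢
    exact hl.trans hv
  · intro hsub
    have hj : j ∈ univ.filter fun l => x l < x i := by simp [hv]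
    have h2 := hsub hj
    simp only [mem_filter, mem_univ, true_and] at h2
    exact absurd h2 (lt_irrefl _)

lemma rkMono {i j : Fin n} (hv : x j < x i) : rk x j < rk x i :=
  rkMono' hv (fun l hl => valNe hs hx hl)

include hb in
lemma lower : ∀ c : ℕ, ∀ i : Fin n, rk x i = c → 1 + s * c ≤ x i := by
  intro c
  induction c using Nat.strong_induction_on with
  | _ c ih =>
    intro i hc
    rcases Nat.eq_zero_or_pos c with h0 | hpos
    · have := (hb i).1
      subst h0; simpa using this
    · have hne : (univ.filter fun j => x j < x i).Nonempty := by
        rw [← Finset.card_pos]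
        show 0 < rk x i
        omega
      obtain ⟨j, hjmem, hjmax⟩ := Finset.exists_max_image _ x hne
      simp only [mem_filter, mem_univ, true_and] at hjmem
      have hij : j ≠ i := by intro he; subst he; exact absurd hjmem (lt_irrefl _)
      have hset : (univ.filter fun l => x l < x j)
          = (univ.filter fun l => x l < x i).erase j := by
        ext l
        simp only [mem_filter, mem_univ, true_and, mem_erase]
        constructor
        · intro hl
          exact ⟨fun he => by subst he; exact absurd hl (lt_irrefl _), hl.trans hjmem⟩
        · rintro ⟨hlj, hli⟩
          have h1 := hjmax l (by simp [hli])
          have h2 := valNe hs hx hlj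
          omega
      have hrj : rk x j = c - 1 := by
        simp only [rk] at hc ⊢
        rw [hset, Finset.card_erase_of_mem (by simp [hjmem]), hc]
      have h1 := ih (c - 1) (by omega) j hrj
      have h2 := gap1 hs hx hij hjmem
      have hcast : ((c - 1 : ℕ) : ℤ) = (c : ℤ) - 1 := by omega
      rw [hcast] at h1
      have : s * ((c : ℤ) - 1) = s * c - s := by ring
      omega

include hb in
lemma upper : ∀ c : ℕ, ∀ i : Fin n, rk' x i = c → x i + s * c ≤ m := by
  intro c
  induction c using Nat.strong_induction_on with
  | _ c ih =>
    intro i hc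
    rcases Nat.eq_zero_or_pos c with h0 | hpos
    · have := (hb i).2
      subst h0; simpa using this
    · have hne : (univ.filter fun j => x i < x j).Nonempty := by
        rw [← Finset.card_pos]
        show 0 < rk' x i
        omega
      obtain ⟨j, hjmem, hjmin⟩ := Finset.exists_min_image _ x hne
      simp only [mem_filter, mem_univ, true_and] at hjmem
      have hij : i ≠ j := by intro he; subst he; exact absurd hjmem (lt_irrefl _)
      have hset : (univ.filter fun l => x j < x l)
          = (univ.filter fun l => x i < x l).erase j := by
        ext l
        simp only [mem_filter, mem_univ, true_and, mem_erase]
        constructor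
        · intro hl
          exact ⟨fun he => by subst he; exact absurd hl (lt_irrefl _), hjmem.trans hl⟩
        · rintro ⟨hlj, hli⟩
          have h1 := hjmin l (by simp [hli])
          have h2 := valNe hs hx (Ne.symm hlj)
          omega
      have hrj : rk' x j = c - 1 := by
        simp only [rk'] at hc ⊢
        rw [hset, Finset.card_erase_of_mem (by simp [hjmem]), hc]
      have h1 := ih (c - 1) (by omega) j hrj
      have h2 := gap1 hs hx hij hjmem
      have hcast : ((c - 1 : ℕ) : ℤ) = (c : ℤ) - 1 := by omega
      rw [hcast] at h1
      have : s * ((c : ℤ) - 1) = s * c - s := by ring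
      omega

lemma rkSum (i : Fin n) : rk x i + rk' x i + 1 = n := by
  have hdisj : Disjoint (univ.filter fun j => x j < x i)
      (univ.filter fun j => x i < x j) := by
    rw [Finset.disjoint_left]
    intro a ha hb'
    simp only [mem_filter, mem_univ, true_and] at ha hb'
    omega
  have hunion : (univ.filter fun j => x j < x i) ∪ (univ.filter fun j => x i < x j)
      = univ.erase i := by
    ext l
    simp only [mem_union, mem_filter, mem_univ, true_and, mem_erase, and_true]
    constructor
    · intro h
      rcases h with h | h <;> (intro he; subst he; exact absurd h (lt_irrefl _))
    · intro h
      have := valNe hs hx h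
      omega
  have hcu := Finset.card_union_of_disjoint hdisj
  rw [hunion, Finset.card_erase_of_mem (by simp), Finset.card_univ, Fintype.card_fin] at hcu
  have hn : 0 < n := Fin.pos i
  simp only [rk, rk']
  omega

lemma relChain : ∀ d : ℕ, ∀ i j : Fin n, x j < x i → rk x i = rk x j + d →
    x j + s * d + (if (j : ℕ) < (i : ℕ) then 1 else 0) ≤ x i := by
  intro d
  induction d using Nat.strong_induction_on with
  | _ d ih =>
    intro i j hv hd
    have hmono := rkMono hs hx hv
    have hd1 : 1 ≤ d := by omega
    have hji : j ≠ i := by intro he; subst he; exact absurd hv (lt_irrefl _)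
    rcases Nat.eq_or_lt_of_le hd1 with h1 | h2
    · -- d = 1
      have hg1 := gap1 hs hx hji hv
      by_cases hlt : (j : ℕ) < (i : ℕ)
      · have hg2 := gap2 hs hx (Fin.lt_def.mpr hlt) hv
        rw [if_pos hlt, ← h1]
        push_cast; omega
      · rw [if_neg hlt, ← h1]
        push_cast; omega
    · -- d ≥ 2
      have hne : (univ.filter fun l => x l < x i).Nonempty := by
        rw [← Finset.card_pos]
        show 0 < rk x i
        omega
      obtain ⟨l, hlmem, hlmax⟩ := Finset.exists_max_image _ x hne
      simp only [mem_filter, mem_univ, true_and] at hlmem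
      have hli : l ≠ i := by intro he; subst he; exact absurd hlmem (lt_irrefl _)
      have hset : (univ.filter fun a => x a < x l)
          = (univ.filter fun a => x a < x i).erase l := by
        ext a
        simp only [mem_filter, mem_univ, true_and, mem_erase]
        constructor
        · intro ha
          exact ⟨fun he => by subst he; exact absurd ha (lt_irrefl _), ha.trans hlmem⟩
        · rintro ⟨hal, hai⟩
          have h1 := hlmax a (by simp [hai])
          have h2 := valNe hs hx hal
          omega
      have hrl : rk x l = rk x i - 1 := by
        simp only [rk]
        rw [hset, Finset.card_erase_of_mem (by simp [hlmem])]
      have hjl : j ≠ l := by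
        intro he; subst he
        omega
      have hxjl : x j < x l := by
        have h1 := hlmax j (by simp [hv])
        have h2 := valNe hs hx hjl
        omega
      have h3 : rk x l = rk x j + (d - 1) := by omega
      have ih1 := ih (d - 1) (by omega) l j hxjl h3
      have ih2 := ih 1 (by omega) i l hlmem (by omega)
      have hcast : ((d - 1 : ℕ) : ℤ) = (d : ℤ) - 1 := by omega
      rw [hcast] at ih1
      have hr : s * ((d : ℤ) - 1) = s * d - s := by ring
      have hjl' : (j : ℕ) ≠ (l : ℕ) := fun he => hjl (Fin.ext he)
      have hli' : (l : ℕ) ≠ (i : ℕ) := fun he => hli (Fin.ext he)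
      simp only [Nat.cast_one] at ih2
      split_ifs at ih1 ih2 ⊢ <;> omega

/-- the compressed map -/
def compress (s : ℤ) (x : Fin n → ℤ) (i : Fin n) : ℤ := x i - s * rk x i

lemma yOrder {i j : Fin n} (hv : x j < x i) :
    compress s x j < compress s x i ∨ (compress s x j = compress s x i ∧ i < j) := by
  have hmono := rkMono hs hx hv
  have hd : rk x i = rk x j + (rk x i - rk x j) := by omega
  have h := relChain hs hx (rk x i - rk x j) i j hv hd
  have hcast : ((rk x i - rk x j : ℕ) : ℤ) = (rk x i : ℤ) - rk x j := by omega
  rw [hcast] at h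
  have hr : s * ((rk x i : ℤ) - (rk x j : ℤ)) = s * rk x i - s * rk x j := by ring
  unfold compress
  by_cases hji : (j : ℕ) < (i : ℕ)
  · rw [if_pos hji] at h
    left; omega
  · rw [if_neg hji] at h
    have hne : i ≠ j := fun he => absurd hv (by rw [he]; exact lt_irrefl _)
    have hij : i < j := by
      rw [Fin.lt_def]
      have : (i : ℕ) ≠ (j : ℕ) := fun he => hne (Fin.ext he)
      omega
    rcases lt_or_eq_of_le (show x j - s * (rk x j : ℤ) ≤ x i - s * (rk x i : ℤ) by omega)
      with hlt | heq
    · left; exact hlt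
    · right; exact ⟨heq, hij⟩

include hb in
lemma compress_bounds (i : Fin n) :
    1 ≤ compress s x i ∧ compress s x i ≤ m - s * ((n : ℤ) - 1) := by
  constructor
  · have h1 := lower hs hb hx (rk x i) i rfl
    unfold compress
    omega
  · have h2 := upper hs hb hx (rk' x i) i rfl
    have h3 := rkSum hs hx i
    have hc : (rk x i : ℤ) + (rk' x i : ℤ) = (n : ℤ) - 1 := by
      push_cast
      omega
    unfold compress
    have he : s * ((rk x i : ℤ) + (rk' x i : ℤ)) = s * ((n : ℤ) - 1) := by rw [hc]
    have hdistrib : s * ((rk x i : ℤ) + (rk' x i : ℤ))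
        = s * (rk x i : ℤ) + s * (rk' x i : ℤ) := by ring
    omega

lemma rkEq (i : Fin n) : lrk (compress s x) i = rk x i := by
  have hiff : ∀ j, (compress s x j < compress s x i ∨
      (compress s x j = compress s x i ∧ i < j)) ↔ x j < x i := by
    intro j
    constructor
    · intro h
      have hji : j ≠ i := by
        rintro rfl
        rcases h with h | ⟨_, h⟩
        · exact absurd h (lt_irrefl _)
        · exact absurd h (lt_irrefl _)
      rcases lt_trichotomy (x j) (x i) with hlt | heq | hgt
      · exact hlt
      · exact absurd heq (valNe hs hx hji)
      · have := yOrder hs hx hgt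
        have hij' : ¬ (i < j ∧ j < i) := fun ⟨a, b⟩ => absurd (a.trans b) (lt_irrefl _)
        rcases this with h' | ⟨he', hji'⟩ <;> rcases h with h'' | ⟨he'', hij''⟩ <;> omega
    · intro h
      exact yOrder hs hx h
  unfold lrk rk
  congr 1
  ext j
  simp only [mem_filter, mem_univ, true_and]
  exact hiff j

end X

section Y

variable {s m : ℤ} {y : Fin n → ℤ}

lemma lrkMono {i j : Fin n}
    (h : y j < y i ∨ (y j = y i ∧ i < j)) : lrk y j < lrk y i := by
  apply Finset.card_lt_card
  constructor
  · intro l hl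
    simp only [mem_filter, mem_univ, true_and] at hl ⊢
    rcases hl with hl | ⟨he, hlt⟩ <;> rcases h with h | ⟨he', hlt'⟩
    · left; exact hl.trans_le (le_of_lt h)
    · left; exact he' ▸ hl
    · left; exact he ▸ h
    · right
      exact ⟨he.trans he', hlt'.trans hlt⟩
  · intro hsub
    have hj : j ∈ univ.filter fun l => y l < y i ∨ (y l = y i ∧ i < l) := by
      simp only [mem_filter, mem_univ, true_and]; exact h
    have h2 := hsub hj
    simp only [mem_filter, mem_univ, true_and] at h2
    exact h2.elim (fun h' => absurd h' (lt_irrefl _)) (fun h' => absurd h' (lt_irrefl _))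

lemma lrkLe (i : Fin n) : lrk y i + 1 ≤ n := by
  have hsub : (univ.filter fun j => y j < y i ∨ (y j = y i ∧ i < j)) ⊆ univ.erase i := by
    intro l hl
    simp only [mem_filter, mem_univ, true_and] at hl
    simp only [mem_erase, mem_univ, and_true]
    rintro rfl
    rcases hl with h | ⟨_, h⟩ <;> exact absurd h (lt_irrefl _)
  have := Finset.card_le_card hsub
  rw [Finset.card_erase_of_mem (by simp), Finset.card_univ, Fintype.card_fin] at this
  have hn : 0 < n := Fin.pos i
  unfold lrk
  omega

/-- the decompressed map -/
def decompress (s : ℤ) (y : Fin n → ℤ) (i : Fin n) : ℤ := y i + s * lrk y i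

lemma lexTotal {i j : Fin n} (h : i ≠ j) :
    (y j < y i ∨ (y j = y i ∧ i < j)) ∨ (y i < y j ∨ (y i = y j ∧ j < i)) := by
  have h' : (i : ℕ) ≠ (j : ℕ) := fun he => h (Fin.ext he)
  rcases lt_trichotomy (y j) (y i) with hlt | heq | hgt
  · left; left; exact hlt
  · rcases Nat.lt_trichotomy (i : ℕ) (j : ℕ) with hij | hij | hij
    · left; right; exact ⟨heq, Fin.lt_def.mpr hij⟩
    · exact absurd hij h'
    · right; right; exact ⟨heq.symm, Fin.lt_def.mpr hij⟩
  · right; left; exact hgt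

lemma decompress_gap (hs : 1 ≤ s) {i j : Fin n} (hij : i < j) :
    decompress s y j ≤ decompress s y i - s ∨
      decompress s y i + s + 1 ≤ decompress s y j := by
  have hne : i ≠ j := Fin.ne_of_lt hij
  rcases lexTotal (y := y) hne with h | h
  · -- j before i : x j ≤ x i - s
    left
    have hm := lrkMono h
    have hy : y j ≤ y i := by rcases h with h | ⟨h, _⟩ <;> omega
    unfold decompress
    have : s * (lrk y j : ℤ) + s ≤ s * lrk y i := by
      have h1 : (lrk y j : ℤ) + 1 ≤ lrk y i := by exact_mod_cast hm
      nlinarith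
    omega
  · -- i before j : since i < j, tie impossible, so y i < y j
    right
    have hy : y i < y j := by
      rcases h with h | ⟨_, h⟩
      · exact h
      · exact absurd (hij.trans h) (lt_irrefl _)
    have hm := lrkMono h
    unfold decompress
    have : s * (lrk y i : ℤ) + s ≤ s * lrk y j := by
      have h1 : (lrk y i : ℤ) + 1 ≤ lrk y j := by exact_mod_cast hm
      nlinarith
    omega

lemma decompress_order (hs : 1 ≤ s) {i j : Fin n} :
    (y j < y i ∨ (y j = y i ∧ i < j)) → decompress s y j < decompress s y i := by
  intro h
  have hm := lrkMono h
  have hy : y j ≤ y i := by rcases h with h | ⟨h, _⟩ <;> omega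
  unfold decompress
  have : s * (lrk y j : ℤ) + s ≤ s * lrk y i := by
    have h1 : (lrk y j : ℤ) + 1 ≤ lrk y i := by exact_mod_cast hm
    nlinarith
  omega

lemma decompress_bounds (hs : 1 ≤ s)
    (hy : ∀ i, 1 ≤ y i ∧ y i ≤ m - s * ((n : ℤ) - 1)) (i : Fin n) :
    1 ≤ decompress s y i ∧ decompress s y i ≤ m := by
  constructor
  · have h0 : (0 : ℤ) ≤ s * lrk y i := by positivity
    have := (hy i).1
    unfold decompress
    omega
  · have h1 := lrkLe (y := y) i
    have h2 : (lrk y i : ℤ) ≤ (n : ℤ) - 1 := by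
      push_cast at h1 ⊢
      omega
    have h3 : s * (lrk y i : ℤ) ≤ s * ((n : ℤ) - 1) :=
      mul_le_mul_of_nonneg_left h2 (by omega)
    have := (hy i).2
    unfold decompress
    omega

lemma decompress_cond (hs : 1 ≤ s) :
    ∀ i j : Fin n, i < j → ∀ g : ℤ, -s + 1 ≤ g → g ≤ s →
      decompress s y j ≠ decompress s y i + g := by
  intro i j hij g hg1 hg2 he
  have := decompress_gap (y := y) hs hij
  omega

lemma rk_decompress (hs : 1 ≤ s) (i : Fin n) : rk (decompress s y) i = lrk y i := by
  unfold rk lrk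
  congr 1
  ext j
  simp only [mem_filter, mem_univ, true_and]
  constructor
  · intro h
    by_cases hne : i = j
    · subst hne; exact absurd h (lt_irrefl _)
    · rcases lexTotal (y := y) hne with h' | h'
      · exact h'
      · have := decompress_order (y := y) hs h'
        omega
  · intro h
    exact decompress_order hs h

end Y

end ShiProof

namespace ShiProof

lemma latticeCount_eq {n : ℕ} (s m : ℤ) (hs : 1 ≤ s) :
    latticeCount (-s + 1) s n m =
      Nat.card {y : Fin n → ℤ // ∀ i, 1 ≤ y i ∧ y i ≤ m - s * ((n : ℤ) - 1)} := by
  apply Nat.card_congr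
  exact
    { toFun := fun x => ⟨compress s x.1,
        fun i => compress_bounds hs x.2.1 x.2.2 i⟩
      invFun := fun y => ⟨decompress s y.1,
        fun i => decompress_bounds hs y.2 i, decompress_cond hs⟩
      left_inv := by
        rintro ⟨x, hb, hx⟩
        apply Subtype.ext
        funext i
        show decompress s (compress s x) i = x i
        unfold decompress
        rw [rkEq hs hx]
        unfold compress
        ring
      right_inv := by
        rintro ⟨y, hy⟩
        apply Subtype.ext
        funext i
        show compress s (decompress s y) i = y i
        unfold compress
        rw [rk_decompress hs]
        unfold decompress
        ring }

lemma boxCount {n : ℕ} (k : ℤ) :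
    Nat.card {y : Fin n → ℤ // ∀ i, 1 ≤ y i ∧ y i ≤ k} = k.toNat ^ n := by
  have e1 : {y : Fin n → ℤ // ∀ i, 1 ≤ y i ∧ y i ≤ k}
      ≃ (Fin n → {z : ℤ // z ∈ Finset.Icc 1 k}) :=
    { toFun := fun y i => ⟨y.1 i, by
        rw [Finset.mem_Icc]
        exact ⟨(y.2 i).1, (y.2 i).2⟩⟩
      invFun := fun f => ⟨fun i => (f i).1, fun i => by
        have := (f i).2
        rw [Finset.mem_Icc] at this
        exact this⟩
      left_inv := fun y => rfl
      right_inv := fun f => rfl }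
  rw [Nat.card_congr e1, Nat.card_pi]
  have h2 : Nat.card {z : ℤ // z ∈ Finset.Icc 1 k} = k.toNat := by
    rw [Nat.card_eq_finsetCard, Int.card_Icc]
    omega
  rw [h2, Finset.prod_const, Finset.card_univ, Fintype.card_fin]

end ShiProof

open ShiProof in
/-- **Extended Shi arrangement count.**  For `n ≥ 1`, `s ≥ 1`, and any integer `m`, the number
of integer points of `[1, m]^n` lying on none of the hyperplanes `x j = x i + g`
(`1 ≤ i < j ≤ n`, `−s + 1 ≤ g ≤ s`) of the extended Shi arrangement `S_n(s)` is
`(m − s(n − 1))^n` when `m ≥ n + (s − 1)(n − 1)` and `0` otherwise. -/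
theorem extended_shi_count (n : ℕ) (hn : 1 ≤ n) (s : ℤ) (hs : 1 ≤ s) (m : ℤ) :
    (latticeCount (-s + 1) s n m : ℤ) =
      if (n : ℤ) + (s - 1) * (n - 1) ≤ m then (m - s * (n - 1)) ^ n else 0 := by
  rw [latticeCount_eq s m hs, boxCount]
  have hiff : ((n : ℤ) + (s - 1) * ((n : ℤ) - 1) ≤ m) ↔ 1 ≤ m - s * ((n : ℤ) - 1) := by
    have he : (n : ℤ) + (s - 1) * ((n : ℤ) - 1) = s * ((n : ℤ) - 1) + 1 := by ring
    rw [he]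
    omega
  by_cases hcond : (n : ℤ) + (s - 1) * ((n : ℤ) - 1) ≤ m
  · rw [if_pos hcond]
    have h1 := hiff.mp hcond
    push_cast
    rw [Int.toNat_of_nonneg (by omega)]
  · rw [if_neg hcond]
    have h1 : ¬ (1 ≤ m - s * ((n : ℤ) - 1)) := fun h => hcond (hiff.mpr h)
    have h2 : (m - s * ((n : ℤ) - 1)).toNat = 0 := by omega
    rw [h2]
    push_cast
    exact zero_pow (by omega)
end
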